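/- arXiv:1606.08988 — 8 statements merged into one kernel-verified Lean document; each statement's English description precedes it below -/
import Mathlib

section
/- For every k ≥ 0 one has √(A_{k+1}) ≥ (1/2) ∑_{i=0}^{k} 1/√(L_{i+1}). In particular, if in addition L_i ≤ 2 L_f for all i ≥ 1 and some L_f > 0, then A_{k+1} ≥ (k+1)²/(8 L_f). -/
/-- For the adaptive accelerated gradient method coefficients `α`, defined from a
positive sequence `L` by `α 0 = 0` and
`α (k+1) = √(α k ^ 2 * L k / L (k+1) + 1 / (4 * L (k+1) ^ 2)) + 1 / (2 * L (k+1))`,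
and `A k := α k ^ 2 * L k`, for every `k ≥ 0` one has
`√(A (k+1)) ≥ (1/2) ∑_{i=0}^{k} 1 / √(L (i+1))`.  In particular, if in addition
`L i ≤ 2 L_f` for all `i ≥ 1` and some `L_f > 0`, then `A (k+1) ≥ (k+1)² / (8 L_f)`. -/
theorem stmt4 (L : ℕ → ℝ) (hL : ∀ k, 0 < L k)
    (α : ℕ → ℝ) (hα0 : α 0 = 0)
    (hαrec : ∀ k, α (k + 1) =
      Real.sqrt ((α k) ^ 2 * L k / L (k + 1) + 1 / (4 * (L (k + 1)) ^ 2))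
        + 1 / (2 * L (k + 1)))
    (A : ℕ → ℝ) (hA : ∀ k, A k = (α k) ^ 2 * L k) (k : ℕ) :
    (1 / 2) * ∑ i ∈ Finset.range (k + 1), 1 / Real.sqrt (L (i + 1))
      ≤ Real.sqrt (A (k + 1)) ∧
    ∀ Lf : ℝ, 0 < Lf → (∀ i, 1 ≤ i → L i ≤ 2 * Lf) →
      ((k : ℝ) + 1) ^ 2 / (8 * Lf) ≤ A (k + 1) := by
  -- step lemma
  have step : ∀ n, Real.sqrt (A n) + 1 / (2 * Real.sqrt (L (n+1))) ≤ Real.sqrt (A (n+1)) := by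
    intro n
    have hLp := hL (n+1)
    have hLne : L (n+1) ≠ 0 := ne_of_gt hLp
    have hsL : (0:ℝ) < Real.sqrt (L (n+1)) := Real.sqrt_pos.mpr hLp
    set s : ℝ := (α n) ^ 2 * L n / L (n + 1) + 1 / (4 * (L (n + 1)) ^ 2) with hs
    have hs0 : 0 ≤ s := by
      have h1 : 0 ≤ (α n) ^ 2 * L n / L (n+1) :=
        div_nonneg (mul_nonneg (sq_nonneg _) (hL n).le) hLp.le
      have h2 : 0 ≤ 1 / (4 * (L (n+1))^2) := by positivity
      rw [hs]; linarith
    have hαn1 : α (n+1) = Real.sqrt s + 1 / (2 * L (n+1)) := hαrec n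
    have hαpos : 0 ≤ α (n+1) := by
      rw [hαn1]; positivity
    have key : Real.sqrt (A (n+1)) = Real.sqrt s * Real.sqrt (L (n+1)) + 1 / (2 * Real.sqrt (L (n+1))) := by
      rw [hA, Real.sqrt_mul (sq_nonneg _), Real.sqrt_sq hαpos, hαn1, add_mul]
      congr 1
      rw [div_mul_eq_mul_div, one_mul]
      rw [div_eq_div_iff (by positivity) (by positivity)]
      have : Real.sqrt (L (n+1)) * Real.sqrt (L (n+1)) = L (n+1) :=
        Real.mul_self_sqrt hLp.le
      nlinarith
    rw [key]
    have hsq : Real.sqrt (A n) ≤ Real.sqrt s * Real.sqrt (L (n+1)) := by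
      rw [← Real.sqrt_mul hs0]
      apply Real.sqrt_le_sqrt
      rw [hA]
      have : s * L (n+1) = (α n)^2 * L n + 1 / (4 * L (n+1)) := by
        rw [hs]; field_simp
      rw [this]
      have : 0 < 1 / (4 * L (n+1)) := by positivity
      linarith
    linarith
  have main : ∀ n, (1 / 2) * ∑ i ∈ Finset.range n, 1 / Real.sqrt (L (i + 1))
      ≤ Real.sqrt (A n) := by
    intro n
    induction n with
    | zero => simp [hA, hα0]
    | succ m ih =>
      rw [Finset.sum_range_succ]
      have := step m
      have hsL : (0:ℝ) < Real.sqrt (L (m+1)) := Real.sqrt_pos.mpr (hL (m+1))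
      have : 1 / (2 * Real.sqrt (L (m+1))) = (1/2) * (1 / Real.sqrt (L (m+1))) := by
        ring
      linarith [step m, ih, this ▸ step m]
  refine ⟨main (k+1), ?_⟩
  intro Lf hLf hLb
  have hA1 : 0 ≤ A (k+1) := by rw [hA]; exact mul_nonneg (sq_nonneg _) (hL _).le
  have hsum : ((k:ℝ)+1) * (1 / Real.sqrt (2 * Lf)) ≤
      ∑ i ∈ Finset.range (k + 1), 1 / Real.sqrt (L (i + 1)) := by
    have := Finset.sum_le_sum (f := fun _ : ℕ => 1 / Real.sqrt (2 * Lf))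
      (g := fun i : ℕ => 1 / Real.sqrt (L (i + 1))) (s := Finset.range (k+1))
      (fun i _ => by
        apply one_div_le_one_div_of_le (Real.sqrt_pos.mpr (hL (i+1)))
        exact Real.sqrt_le_sqrt (hLb (i+1) (Nat.le_add_left 1 i)))
    simpa [Finset.sum_const, Finset.card_range, mul_comm] using this
  have h1 := main (k+1)
  have hs2 : (0:ℝ) < Real.sqrt (2 * Lf) := Real.sqrt_pos.mpr (by linarith)
  have hlow : ((k:ℝ)+1) / (2 * Real.sqrt (2*Lf)) ≤ Real.sqrt (A (k+1)) := by
    have h2 : (1/2) * (((k:ℝ)+1) * (1 / Real.sqrt (2 * Lf))) ≤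
        (1 / 2) * ∑ i ∈ Finset.range (k + 1), 1 / Real.sqrt (L (i + 1)) := by
      linarith
    calc ((k:ℝ)+1) / (2 * Real.sqrt (2*Lf))
        = (1/2) * (((k:ℝ)+1) * (1 / Real.sqrt (2 * Lf))) := by ring
      _ ≤ _ := le_trans h2 h1
  have hsq := Real.sq_sqrt hA1
  have hkpos : (0:ℝ) ≤ (k:ℝ)+1 := by positivity
  have hlow2 : (((k:ℝ)+1) / (2 * Real.sqrt (2*Lf)))^2 ≤ A (k+1) := by
    rw [← hsq]
    apply pow_le_pow_left₀ (by positivity) hlow 2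
  have hss : Real.sqrt (2*Lf) ^ 2 = 2 * Lf := Real.sq_sqrt (by linarith)
  have : (((k:ℝ)+1) / (2 * Real.sqrt (2*Lf)))^2 = ((k:ℝ)+1)^2 / (8 * Lf) := by
    rw [div_pow, mul_pow, hss]; ring_nf
  linarith [this ▸ hlow2]
end

section
/- Under the per-step conditions listed in the context, for every u ∈ Q: α⟨∇f(x₊), z − u⟩ ≤ α²L(φ(x₊) − φ(y₊)) + (V_z(u) − V_{z₊}(u)) + αΨ(u) − α²L·Ψ(x₊) + (α²L − α)·Ψ(y). -/
open RealInnerProductSpace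

/-- One step of the accelerated composite gradient method (Lemma 1 of the paper):
under the per-step conditions, for every `u ∈ Q`,
`α⟨∇f(x₊), z − u⟩ ≤ α²L(φ(x₊) − φ(y₊)) + (V_z(u) − V_{z₊}(u)) + αΨ(u) − α²L·Ψ(x₊)
  + (α²L − α)·Ψ(y)`. -/
theorem stmt5
    {H : Type*} [NormedAddCommGroup H] [InnerProductSpace ℝ H] [CompleteSpace H]
    (Q : Set H) (hQne : Q.Nonempty) (hQclosed : IsClosed Q) (hQconv : Convex ℝ Q)
    (f Ψ ω : H → ℝ) (fgrad ωgrad : H → H)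
    (hf : ∀ x, HasGradientAt f (fgrad x) x)
    (hω : ∀ x, HasGradientAt ω (ωgrad x) x)
    (hfconv : ConvexOn ℝ Q f) (hΨconv : ConvexOn ℝ Q Ψ)
    (hωstrong : ∀ a ∈ Q, ∀ b ∈ Q,
      ω a + ⟪ωgrad a, b - a⟫ + (1 / 2) * ‖b - a‖ ^ 2 ≤ ω b)
    (V : H → H → ℝ)
    (hV : ∀ a b, V a b = ω b - ω a - ⟪ωgrad a, b - a⟫)
    (φ : H → ℝ) (hφ : ∀ v, φ v = f v + Ψ v)
    (α L : ℝ) (hα : 0 < α) (hL : 0 < L) (hαL : 1 ≤ α * L)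
    (τ : ℝ) (hτ : τ = 1 / (α * L))
    (y z : H) (hy : y ∈ Q) (hz : z ∈ Q)
    (xp : H) (hxp : xp = τ • z + (1 - τ) • y)
    (yp : H) (hypQ : yp ∈ Q)
    (hypmin : ∀ v ∈ Q,
      ⟪fgrad xp, yp - xp⟫ + (L / 2) * ‖yp - xp‖ ^ 2 + Ψ yp ≤
        ⟪fgrad xp, v - xp⟫ + (L / 2) * ‖v - xp‖ ^ 2 + Ψ v)
    (zp : H) (hzpQ : zp ∈ Q)
    (hzpmin : ∀ v ∈ Q,
      ⟪fgrad xp, zp - z⟫ + (1 / α) * V z zp + Ψ zp ≤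
        ⟪fgrad xp, v - z⟫ + (1 / α) * V z v + Ψ v)
    (hdescent : f yp ≤ f xp + ⟪fgrad xp, yp - xp⟫ + (L / 2) * ‖yp - xp‖ ^ 2)
    (u : H) (hu : u ∈ Q) :
    α * ⟪fgrad xp, z - u⟫ ≤
      α ^ 2 * L * (φ xp - φ yp) + (V z u - V zp u) + α * Ψ u
        - α ^ 2 * L * Ψ xp + (α ^ 2 * L - α) * Ψ y := by
  have hα0 : α ≠ 0 := ne_of_gt hα
  set g : H := fgrad xp with hg
  set d : H := u - zp with hd
  -- derivative of ω along the segment from zp towards u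
  have hline : HasDerivAt (fun t : ℝ => ω (zp + t • d)) ⟪ωgrad zp, d⟫ 0 := by
    have h1 : HasDerivAt (fun t : ℝ => zp + t • d) d 0 := by
      simpa using ((hasDerivAt_id (0 : ℝ)).smul_const d).const_add zp
    have h2 : HasFDerivAt ω (InnerProductSpace.toDual ℝ H (ωgrad zp))
        ((fun t : ℝ => zp + t • d) 0) := by
      simpa using (hω zp).hasFDerivAt
    have h3 := h2.comp_hasDerivAt 0 h1
    simpa [InnerProductSpace.toDual_apply_apply, Function.comp_def] using h3
  -- slope lower bound near 0
  have hev : ∀ᶠ t in nhdsWithin (0:ℝ) (Set.Ioi 0),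
      -(α * ⟪g, d⟫ - ⟪ωgrad z, d⟫ + α * (Ψ u - Ψ zp)) ≤
        slope (fun t : ℝ => ω (zp + t • d)) 0 t := by
    filter_upwards [Ioo_mem_nhdsGT_of_mem
      (show (0:ℝ) ∈ Set.Ico (0:ℝ) 1 from ⟨le_refl 0, one_pos⟩)] with t ht
    obtain ⟨ht0, ht1⟩ := ht
    have hveq : zp + t • d = (1 - t) • zp + t • u := by rw [hd]; module
    have hvQ : zp + t • d ∈ Q := by
      rw [hveq]; exact hQconv hzpQ hu (by linarith) ht0.le (by ring)
    have hΨv : Ψ (zp + t • d) ≤ (1 - t) * Ψ zp + t * Ψ u := by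
      rw [hveq]; exact hΨconv.2 hzpQ hu (by linarith) ht0.le (by ring)
    have spec := hzpmin (zp + t • d) hvQ
    have ia : ⟪g, zp + t • d - z⟫ = ⟪g, zp - z⟫ + t * ⟪g, d⟫ := by
      rw [show zp + t • d - z = (zp - z) + t • d from by abel, inner_add_right,
        real_inner_smul_right]
    have ib : V z (zp + t • d) - V z zp
        = ω (zp + t • d) - ω zp - t * ⟪ωgrad z, d⟫ := by
      rw [hV, hV, show zp + t • d - z = (zp - z) + t • d from by abel, inner_add_right,
        real_inner_smul_right]
      ring
    have h5 : 0 ≤ (t * ⟪g, d⟫ + Ψ (zp + t • d) - Ψ zp)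
        + (1/α) * (V z (zp + t • d) - V z zp) := by
      rw [ia] at spec; linarith
    have h6 := mul_le_mul_of_nonneg_left h5 hα.le
    have h8 : α * ((1/α) * (V z (zp + t • d) - V z zp))
        = V z (zp + t • d) - V z zp := by field_simp
    have h7 : 0 ≤ α * (t * ⟪g, d⟫ + Ψ (zp + t • d) - Ψ zp)
        + (V z (zp + t • d) - V z zp) := by linarith
    rw [ib] at h7
    have hΨ2 := mul_le_mul_of_nonneg_left hΨv hα.le
    have hts : slope (fun t : ℝ => ω (zp + t • d)) 0 t
        = (ω (zp + t • d) - ω zp) / t := by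
      simp [slope_def_field]
    rw [hts, le_div_iff₀ ht0]
    nlinarith [h7, hΨ2]
  have opt : -(α * ⟪g, d⟫ - ⟪ωgrad z, d⟫ + α * (Ψ u - Ψ zp)) ≤ ⟪ωgrad zp, d⟫ := by
    have hslope := hasDerivAt_iff_tendsto_slope.mp hline
    have hmono : nhdsWithin (0:ℝ) (Set.Ioi 0) ≤ nhdsWithin (0:ℝ) {(0:ℝ)}ᶜ :=
      nhdsWithin_mono _ (fun x hx => ne_of_gt hx)
    exact ge_of_tendsto (hslope.mono_left hmono) hev
  -- step from the yp-minimality, descent and convexity of Ψ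
  have hτ0 : 0 < τ := by rw [hτ]; positivity
  have hτ1 : τ ≤ 1 := by rw [hτ, div_le_one (by positivity)]; exact hαL
  have hwQ : τ • zp + (1 - τ) • y ∈ Q := hQconv hzpQ hy hτ0.le (by linarith) (by ring)
  have spec2 := hypmin _ hwQ
  have hwx : τ • zp + (1 - τ) • y - xp = τ • (zp - z) := by rw [hxp]; module
  have ic : ⟪g, τ • zp + (1 - τ) • y - xp⟫ = τ * ⟪g, zp - z⟫ := by
    rw [hwx, real_inner_smul_right]
  have inorm : ‖τ • zp + (1 - τ) • y - xp‖ ^ 2 = τ ^ 2 * ‖zp - z‖ ^ 2 := by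
    rw [hwx, norm_smul, Real.norm_eq_abs, abs_of_pos hτ0, mul_pow]
  have hΨw : Ψ (τ • zp + (1 - τ) • y) ≤ τ * Ψ zp + (1 - τ) * Ψ y :=
    hΨconv.2 hzpQ hy hτ0.le (by linarith) (by ring)
  have h1 : f yp + Ψ yp ≤ f xp + (τ * ⟪g, zp - z⟫ + L / 2 * (τ ^ 2 * ‖zp - z‖ ^ 2)
      + (τ * Ψ zp + (1 - τ) * Ψ y)) := by
    rw [ic, inorm] at spec2; linarith
  have h2 := mul_le_mul_of_nonneg_left h1 (by positivity : (0:ℝ) ≤ α ^ 2 * L)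
  have e3 : α ^ 2 * L * (f xp + (τ * ⟪g, zp - z⟫ + L / 2 * (τ ^ 2 * ‖zp - z‖ ^ 2)
      + (τ * Ψ zp + (1 - τ) * Ψ y)))
      = α ^ 2 * L * f xp + α * ⟪g, zp - z⟫ + 1/2 * ‖zp - z‖ ^ 2 + α * Ψ zp
        + (α ^ 2 * L - α) * Ψ y := by
    rw [hτ]; field_simp; ring
  have stepY : α ^ 2 * L * (f yp + Ψ yp) ≤ α ^ 2 * L * f xp + α * ⟪g, zp - z⟫
      + 1/2 * ‖zp - z‖ ^ 2 + α * Ψ zp + (α ^ 2 * L - α) * Ψ y := by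
    linarith [h2, e3]
  have sc := hωstrong z hz zp hzpQ
  simp only [hφ, hV]
  simp only [hd] at opt
  simp only [inner_sub_right] at opt sc stepY ⊢
  linarith [opt, sc, stepY]
end

section
/- Under the per-step conditions listed in the context, for every u ∈ Q: α²L·φ(y₊) − (α²L − α)·φ(y) ≤ α·( f(x₊) + ⟨∇f(x₊), u − x₊⟩ + Ψ(u) ) + (V_z(u) − V_{z₊}(u)). -/
open RealInnerProductSpace Filter Set

lemma slope_tendsto' {H : Type*} [NormedAddCommGroup H] [InnerProductSpace ℝ H] [CompleteSpace H]
    {h : H → ℝ} {gr x : H} (hh : HasGradientAt h gr x) (w : H) :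
    Tendsto (fun t : ℝ => (h (x + t • w) - h x) / t) (nhdsWithin 0 (Set.Ioi 0)) (nhds ⟪gr, w⟫) := by
  have hline : HasDerivAt (fun t : ℝ => x + t • w) w 0 := by
    simpa using ((hasDerivAt_id (0:ℝ)).smul_const w).const_add x
  have hd : HasDerivAt (fun t : ℝ => h (x + t • w)) ⟪gr, w⟫ 0 := by
    have := (show HasFDerivAt h ((InnerProductSpace.toDual ℝ H) gr) (x + (0:ℝ) • w) by
      simpa using hh.hasFDerivAt).comp_hasDerivAt 0 hline
    rw [InnerProductSpace.toDual_apply_apply] at this; exact this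
  have h1 := hasDerivAt_iff_tendsto_slope.mp hd
  have h2 : Tendsto (slope (fun t : ℝ => h (x + t • w)) 0) (nhdsWithin 0 (Set.Ioi 0))
      (nhds ⟪gr, w⟫) :=
    h1.mono_left (nhdsWithin_mono _ (fun t ht => Set.mem_compl_singleton_iff.mpr (ne_of_gt ht)))
  refine h2.congr (fun t => ?_)
  simp [slope_def_field, div_eq_inv_mul]

set_option maxHeartbeats 1000000 in
/-- One step of the accelerated composite gradient method (Lemma 2 of the paper):
under the per-step conditions, for every `u ∈ Q`,
`α²L·φ(y₊) − (α²L − α)·φ(y) ≤ α·( f(x₊) + ⟨∇f(x₊), u − x₊⟩ + Ψ(u) ) + (V_z(u) − V_{z₊}(u))`. -/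
theorem stmt6
    {H : Type*} [NormedAddCommGroup H] [InnerProductSpace ℝ H] [CompleteSpace H]
    (Q : Set H) (hQne : Q.Nonempty) (hQclosed : IsClosed Q) (hQconv : Convex ℝ Q)
    (f Ψ ω : H → ℝ) (fgrad ωgrad : H → H)
    (hf : ∀ x, HasGradientAt f (fgrad x) x)
    (hω : ∀ x, HasGradientAt ω (ωgrad x) x)
    (hfconv : ConvexOn ℝ Q f) (hΨconv : ConvexOn ℝ Q Ψ)
    (hωstrong : ∀ a ∈ Q, ∀ b ∈ Q,
      ω a + ⟪ωgrad a, b - a⟫ + (1 / 2) * ‖b - a‖ ^ 2 ≤ ω b)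
    (V : H → H → ℝ)
    (hV : ∀ a b, V a b = ω b - ω a - ⟪ωgrad a, b - a⟫)
    (φ : H → ℝ) (hφ : ∀ v, φ v = f v + Ψ v)
    (α L : ℝ) (hα : 0 < α) (hL : 0 < L) (hαL : 1 ≤ α * L)
    (τ : ℝ) (hτ : τ = 1 / (α * L))
    (y z : H) (hy : y ∈ Q) (hz : z ∈ Q)
    (xp : H) (hxp : xp = τ • z + (1 - τ) • y)
    (yp : H) (hypQ : yp ∈ Q)
    (hypmin : ∀ v ∈ Q,
      ⟪fgrad xp, yp - xp⟫ + (L / 2) * ‖yp - xp‖ ^ 2 + Ψ yp ≤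
        ⟪fgrad xp, v - xp⟫ + (L / 2) * ‖v - xp‖ ^ 2 + Ψ v)
    (zp : H) (hzpQ : zp ∈ Q)
    (hzpmin : ∀ v ∈ Q,
      ⟪fgrad xp, zp - z⟫ + (1 / α) * V z zp + Ψ zp ≤
        ⟪fgrad xp, v - z⟫ + (1 / α) * V z v + Ψ v)
    (hdescent : f yp ≤ f xp + ⟪fgrad xp, yp - xp⟫ + (L / 2) * ‖yp - xp‖ ^ 2)
    (u : H) (hu : u ∈ Q) :
    α ^ 2 * L * φ yp - (α ^ 2 * L - α) * φ y ≤
      α * (f xp + ⟪fgrad xp, u - xp⟫ + Ψ u) + (V z u - V zp u) := by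
  have hALpos : 0 < α * L := mul_pos hα hL
  have hτ0 : 0 < τ := by rw [hτ]; positivity
  have hτ1 : τ ≤ 1 := by rw [hτ]; rw [div_le_one hALpos]; linarith
  have hτinv : τ * (α * L) = 1 := by rw [hτ]; field_simp
  have hxpQ : xp ∈ Q := by
    rw [hxp]; exact hQconv hz hy hτ0.le (by linarith) (by ring)
  set g := fgrad xp with hg
  have hkey : ∀ X : ℝ, α * (1 / α * X) = X := fun X => by field_simp
  -- convexity of f : ⟪g, y - xp⟫ ≤ f y - f xp
  have hconvf : ⟪g, y - xp⟫ ≤ f y - f xp := by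
    have hlim := slope_tendsto' (hf xp) (y - xp)
    refine le_of_tendsto hlim ?_
    filter_upwards [Ioo_mem_nhdsGT_of_mem (by constructor <;> norm_num : (0:ℝ) ∈ Set.Ico 0 1)]
      with t ht
    have hvt : xp + t • (y - xp) = (1 - t) • xp + t • y := by module
    have hcv : f (xp + t • (y - xp)) ≤ (1 - t) * f xp + t * f y := by
      rw [hvt]
      exact hfconv.2 hxpQ hy (by linarith [ht.2]) ht.1.le (by ring)
    rw [div_le_iff₀ ht.1]
    nlinarith [hcv]
  have hyxp : y - xp = τ • (y - z) := by rw [hxp]; module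
  have hiy : ⟪g, y - xp⟫ = τ * ⟪g, y - z⟫ := by rw [hyxp, real_inner_smul_right]
  have H2 : τ * ⟪g, y - z⟫ ≤ f y - f xp := by rw [← hiy]; exact hconvf
  -- the three-point inequality (multiplied through by α)
  have hstar : α * (Ψ zp - Ψ u - ⟪g, u - zp⟫) + ⟪ωgrad z, u - zp⟫ ≤ ⟪ωgrad zp, u - zp⟫ := by
    have hlim := slope_tendsto' (hω zp) (u - zp)
    refine ge_of_tendsto hlim ?_
    filter_upwards [Ioo_mem_nhdsGT_of_mem (by constructor <;> norm_num : (0:ℝ) ∈ Set.Ico 0 1)]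
      with t ht
    set v := zp + t • (u - zp) with hv
    have hvt : v = (1 - t) • zp + t • u := by rw [hv]; module
    have hvQ : v ∈ Q := by rw [hvt]; exact hQconv hzpQ hu (by linarith [ht.2]) ht.1.le (by ring)
    have hmin := hzpmin v hvQ
    have hΨv : Ψ v ≤ (1 - t) * Ψ zp + t * Ψ u := by
      rw [hvt]; exact hΨconv.2 hzpQ hu (by linarith [ht.2]) ht.1.le (by ring)
    have hvz : v - z = (zp - z) + t • (u - zp) := by rw [hv]; module
    have hig : ⟪g, v - z⟫ = ⟪g, zp - z⟫ + t * ⟪g, u - zp⟫ := by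
      rw [hvz, inner_add_right, real_inner_smul_right]
    have hiω : ⟪ωgrad z, v - z⟫ = ⟪ωgrad z, zp - z⟫ + t * ⟪ωgrad z, u - zp⟫ := by
      rw [hvz, inner_add_right, real_inner_smul_right]
    have hminα := mul_le_mul_of_nonneg_left hmin hα.le
    simp only [mul_add] at hminα
    rw [hkey, hkey, hV z v, hV z zp, hig, hiω] at hminα
    have hΨv2 := mul_le_mul_of_nonneg_left hΨv hα.le
    rw [le_div_iff₀ ht.1]
    nlinarith [hminα, hΨv2]
  have h3pt : α * ⟪g, zp - z⟫ + V z zp + α * Ψ zp + V zp u ≤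
      α * ⟪g, u - z⟫ + V z u + α * Ψ u := by
    have hsplit : ⟪g, u - z⟫ = ⟪g, zp - z⟫ + ⟪g, u - zp⟫ := by
      rw [show u - z = (zp - z) + (u - zp) by abel, inner_add_right]
    have hsplit2 : ⟪ωgrad z, u - z⟫ = ⟪ωgrad z, zp - z⟫ + ⟪ωgrad z, u - zp⟫ := by
      rw [show u - z = (zp - z) + (u - zp) by abel, inner_add_right]
    rw [hV z zp, hV z u, hV zp u, hsplit, hsplit2]
    nlinarith [hstar]
  -- main per-step inequality
  set vhat := τ • zp + (1 - τ) • y with hvhat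
  have hvhatQ : vhat ∈ Q := hQconv hzpQ hy hτ0.le (by linarith) (by ring)
  have hvx : vhat - xp = τ • (zp - z) := by rw [hvhat, hxp]; module
  have hivhat : ⟪g, vhat - xp⟫ = τ * ⟪g, zp - z⟫ := by rw [hvx, real_inner_smul_right]
  have hnvhat : ‖vhat - xp‖ ^ 2 = τ ^ 2 * ‖zp - z‖ ^ 2 := by
    rw [hvx, norm_smul, Real.norm_eq_abs, abs_of_pos hτ0]; ring
  have hΨvhat : Ψ vhat ≤ τ * Ψ zp + (1 - τ) * Ψ y :=
    hΨconv.2 hzpQ hy hτ0.le (by linarith) (by ring)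
  have hVzzp : (1/2) * ‖zp - z‖ ^ 2 ≤ V z zp := by
    have := hωstrong z hz zp hzpQ
    rw [hV z zp]; linarith
  have hquad : α * ((L / 2) * ‖vhat - xp‖ ^ 2) ≤ τ * V z zp := by
    have hq : α * ((L / 2) * ‖vhat - xp‖ ^ 2) = τ * ((1/2) * ‖zp - z‖ ^ 2) := by
      rw [hnvhat, hτ]; field_simp
    rw [hq]
    exact mul_le_mul_of_nonneg_left hVzzp hτ0.le
  have H1 : α * (f yp + Ψ yp) ≤ α * f xp +
      τ * (α * ⟪g, u - z⟫ + V z u + α * Ψ u - V zp u) + α * ((1 - τ) * Ψ y) := by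
    have step2 := hypmin vhat hvhatQ
    rw [hivhat] at step2
    have step3 : f yp + Ψ yp ≤ f xp + τ * ⟪g, zp - z⟫ + (L / 2) * ‖vhat - xp‖ ^ 2
        + (τ * Ψ zp + (1 - τ) * Ψ y) := by linarith [hdescent, step2, hΨvhat]
    have step3α := mul_le_mul_of_nonneg_left step3 hα.le
    have step5 : τ * (α * ⟪g, zp - z⟫ + V z zp + α * Ψ zp) ≤
        τ * (α * ⟪g, u - z⟫ + V z u + α * Ψ u - V zp u) :=
      mul_le_mul_of_nonneg_left (by linarith [h3pt]) hτ0.le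
    linarith [step3α, hquad, step5]
  -- final assembly
  have hsplitu : ⟪g, u - z⟫ = ⟪g, u - xp⟫ + (1 - τ) * ⟪g, y - z⟫ := by
    have hxz : xp - z = (1 - τ) • (y - z) := by rw [hxp]; module
    rw [show u - z = (u - xp) + (xp - z) by abel, inner_add_right, hxz, real_inner_smul_right]
  rw [hsplitu] at H1
  have hc : (0:ℝ) < α * L := hALpos
  have hcα : (0:ℝ) ≤ α ^ 2 * L - α := by nlinarith
  have H1c := mul_le_mul_of_nonneg_left H1 hc.le
  have e1 : α * L * (α * f xp + τ * (α * (⟪g, u - xp⟫ + (1 - τ) * ⟪g, y - z⟫) + V z u + α * Ψ u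
      - V zp u) + α * ((1 - τ) * Ψ y)) =
      α ^ 2 * L * f xp + α * ⟪g, u - xp⟫ + α * (1 - τ) * ⟪g, y - z⟫ + V z u + α * Ψ u
      - V zp u + (α ^ 2 * L - α) * Ψ y := by
    rw [hτ]; field_simp; ring
  have H2c := mul_le_mul_of_nonneg_left H2 hcα
  have hcoef : (α ^ 2 * L - α) * τ = α * (1 - τ) := by linear_combination α * hτinv
  have e2 : (α ^ 2 * L - α) * (τ * ⟪g, y - z⟫) = α * (1 - τ) * ⟪g, y - z⟫ := by
    linear_combination ⟪g, y - z⟫ * hcoef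
  rw [e1] at H1c
  rw [e2] at H2c
  rw [hφ yp, hφ y]
  linarith [H1c, H2c]
end

section
/- For the iterates of the adaptive accelerated gradient method described in the context, for every T ≥ 1 and every u ∈ Q: A_T·φ(y_T) ≤ ∑_{k=1}^{T} α_k·( f(x_k) + ⟨∇f(x_k), u − x_k⟩ + Ψ(u) ) + V_{z_0}(u), where A_T = α_T² L_T. In particular A_T·φ(y_T) ≤ min over u ∈ Q of the right-hand side. -/
open RealInnerProductSpace Filter Topology

section aux
variable {H : Type*} [NormedAddCommGroup H] [InnerProductSpace ℝ H] [CompleteSpace H]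

lemma tendsto_slope_aux {f : H → ℝ} {g x : H} (hf : HasGradientAt f g x) (d : H) :
    Tendsto (fun t : ℝ => (f (x + t • d) - f x) / t) (𝓝[>] (0:ℝ)) (𝓝 ⟪g, d⟫) := by
  have hc : HasDerivAt (fun t : ℝ => x + t • d) d 0 := by
    simpa using ((hasDerivAt_id (0:ℝ)).smul_const d).const_add x
  have hF : HasDerivAt (fun t : ℝ => f (x + t • d)) ⟪g, d⟫ 0 := by
    have h1 := (show HasFDerivAt f ((InnerProductSpace.toDual ℝ H) g) ((fun t : ℝ => x + t • d) 0) by simpa using hf.hasFDerivAt).comp_hasDerivAt 0 hc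
    simpa [InnerProductSpace.toDual_apply_apply, Function.comp_def] using h1
  have h2 := hasDerivAt_iff_tendsto_slope.mp hF
  have h3 := h2.mono_left (nhdsWithin_mono _ (fun t ht => ne_of_gt ht))
  refine h3.congr' ?_
  filter_upwards [self_mem_nhdsWithin] with t ht
  simp [slope_def_field]

lemma grad_convex {Q : Set H} {f : H → ℝ} (hf : ConvexOn ℝ Q f)
    {p q g : H} (hg : HasGradientAt f g p) (hp : p ∈ Q) (hq : q ∈ Q) :
    f p + ⟪g, q - p⟫ ≤ f q := by
  have key : ∀ t ∈ Set.Ioc (0:ℝ) 1, (f (p + t • (q - p)) - f p) / t ≤ f q - f p := by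
    intro t ht
    have hmem : p + t • (q - p) = (1 - t) • p + t • q := by module
    have h1 := hf.2 hp hq (by linarith [ht.2] : (0:ℝ) ≤ 1 - t) ht.1.le (by ring)
    rw [hmem, div_le_iff₀ ht.1]; simp only [smul_eq_mul] at h1
    linarith [h1]
  have hlim := tendsto_slope_aux hg (q - p)
  have h2 : ⟪g, q - p⟫ ≤ f q - f p := by
    refine le_of_tendsto hlim ?_
    filter_upwards [Ioc_mem_nhdsGT zero_lt_one] with t ht
    exact key t ht
  linarith
end aux

set_option maxHeartbeats 1000000 in
/-- Primal-dual inequality for the adaptive accelerated composite gradient method: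
for every `T ≥ 1` and every `u ∈ Q`,
`A_T·φ(y_T) ≤ ∑_{k=1}^{T} α_k·( f(x_k) + ⟨∇f(x_k), u − x_k⟩ + Ψ(u) ) + V_{z_0}(u)`,
where `A_T = α_T² L_T`; in particular `A_T·φ(y_T)` is bounded by the minimum over
`u ∈ Q` of the right-hand side. -/
theorem stmt7
    {H : Type*} [NormedAddCommGroup H] [InnerProductSpace ℝ H] [CompleteSpace H]
    (Q : Set H) (hQne : Q.Nonempty) (hQclosed : IsClosed Q) (hQconv : Convex ℝ Q)
    (f Ψ ω : H → ℝ) (fgrad ωgrad : H → H)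
    (hf : ∀ x, HasGradientAt f (fgrad x) x)
    (hω : ∀ x, HasGradientAt ω (ωgrad x) x)
    (hfconv : ConvexOn ℝ Q f) (hΨconv : ConvexOn ℝ Q Ψ)
    (hωstrong : ∀ a ∈ Q, ∀ b ∈ Q,
      ω a + ⟪ωgrad a, b - a⟫ + (1 / 2) * ‖b - a‖ ^ 2 ≤ ω b)
    (V : H → H → ℝ)
    (hV : ∀ a b, V a b = ω b - ω a - ⟪ωgrad a, b - a⟫)
    (φ : H → ℝ) (hφ : ∀ v, φ v = f v + Ψ v)
    (L : ℕ → ℝ) (hL : ∀ k, 0 < L k)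
    (α : ℕ → ℝ) (hα0 : α 0 = 0)
    (hαrec : ∀ k, α (k + 1) =
      Real.sqrt ((α k) ^ 2 * L k / L (k + 1) + 1 / (4 * (L (k + 1)) ^ 2))
        + 1 / (2 * L (k + 1)))
    (τ : ℕ → ℝ) (hτ : ∀ k, τ k = 1 / (α (k + 1) * L (k + 1)))
    (A : ℕ → ℝ) (hA : ∀ k, A k = (α k) ^ 2 * L k)
    (x y z : ℕ → H)
    (hx0 : x 0 ∈ Q) (hy0 : y 0 = x 0) (hz0 : z 0 = x 0)
    (hxrec : ∀ k, x (k + 1) = τ k • z k + (1 - τ k) • y k)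
    (hyQ : ∀ k, y (k + 1) ∈ Q)
    (hymin : ∀ k, ∀ v ∈ Q,
      ⟪fgrad (x (k + 1)), y (k + 1) - x (k + 1)⟫
          + (L (k + 1) / 2) * ‖y (k + 1) - x (k + 1)‖ ^ 2 + Ψ (y (k + 1)) ≤
        ⟪fgrad (x (k + 1)), v - x (k + 1)⟫
          + (L (k + 1) / 2) * ‖v - x (k + 1)‖ ^ 2 + Ψ v)
    (hzQ : ∀ k, z (k + 1) ∈ Q)
    (hzmin : ∀ k, ∀ v ∈ Q,
      ⟪fgrad (x (k + 1)), z (k + 1) - z k⟫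
          + (1 / α (k + 1)) * V (z k) (z (k + 1)) + Ψ (z (k + 1)) ≤
        ⟪fgrad (x (k + 1)), v - z k⟫ + (1 / α (k + 1)) * V (z k) v + Ψ v)
    (hdescent : ∀ k, f (y (k + 1)) ≤
      f (x (k + 1)) + ⟪fgrad (x (k + 1)), y (k + 1) - x (k + 1)⟫
        + (L (k + 1) / 2) * ‖y (k + 1) - x (k + 1)‖ ^ 2)
    (T : ℕ) (hT : 1 ≤ T) (u : H) (hu : u ∈ Q) :
    A T * φ (y T) ≤
      (∑ k ∈ Finset.Icc 1 T,
        α k * (f (x k) + ⟪fgrad (x k), u - x k⟫ + Ψ u)) + V (z 0) u := by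
  -- membership facts
  have hyQ' : ∀ k, y k ∈ Q := by
    intro k; cases k with
    | zero => rw [hy0]; exact hx0
    | succ n => exact hyQ n
  have hzQ' : ∀ k, z k ∈ Q := by
    intro k; cases k with
    | zero => rw [hz0]; exact hx0
    | succ n => exact hzQ n
  -- scalar facts
  have hα1 : ∀ k, 1 / L (k+1) ≤ α (k+1) := by
    intro k
    have hl := hL (k+1)
    rw [hαrec k]
    have h1 : Real.sqrt (1/(4*(L (k+1))^2)) = 1/(2*L (k+1)) := by
      rw [show 1/(4*(L (k+1))^2) = (1/(2*L (k+1)))^2 by ring]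
      exact Real.sqrt_sq (by positivity)
    have h2 : (1:ℝ)/(2*L (k+1)) ≤
        Real.sqrt ((α k)^2 * L k / L (k+1) + 1/(4*(L (k+1))^2)) := by
      rw [← h1]
      apply Real.sqrt_le_sqrt
      have h3 : 0 ≤ (α k)^2 * L k / L (k+1) :=
        div_nonneg (mul_nonneg (sq_nonneg _) (hL k).le) hl.le
      linarith
    have h4 : (2:ℝ) * (1/(2*L (k+1))) = 1 / L (k+1) := by field_simp
    linarith
  have hαpos : ∀ k, 0 < α (k+1) := by
    intro k
    have hl := hL (k+1)
    calc (0:ℝ) < 1 / L (k+1) := by positivity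
    _ ≤ α (k+1) := hα1 k
  have hαL : ∀ k, 1 ≤ α (k+1) * L (k+1) := by
    intro k
    have hl := hL (k+1)
    calc (1:ℝ) = (1 / L (k+1)) * L (k+1) := by field_simp
    _ ≤ α (k+1) * L (k+1) := mul_le_mul_of_nonneg_right (hα1 k) hl.le
  have hAnn : ∀ k, 0 ≤ A k := by
    intro k; rw [hA]; exact mul_nonneg (sq_nonneg _) (hL k).le
  have eAk : ∀ k, A k = L (k+1) * (α (k+1))^2 - α (k+1) := by
    intro k
    have hl := hL (k+1)
    have harg : 0 ≤ (α k)^2 * L k / L (k+1) + 1/(4*(L (k+1))^2) := by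
      have h3 : 0 ≤ (α k)^2 * L k / L (k+1) :=
        div_nonneg (mul_nonneg (sq_nonneg _) (hL k).le) hl.le
      have h4 : (0:ℝ) < 1/(4*(L (k+1))^2) := by positivity
      linarith
    have h1 : α (k+1) - 1/(2*L (k+1)) =
        Real.sqrt ((α k)^2 * L k / L (k+1) + 1/(4*(L (k+1))^2)) := by
      rw [hαrec k]; ring
    have h2 : (α (k+1) - 1/(2*L (k+1)))^2
        = (α k)^2 * L k / L (k+1) + 1/(4*(L (k+1))^2) := by
      rw [h1]; exact Real.sq_sqrt harg
    have hs2 : (Real.sqrt ((α k)^2 * L k / L (k+1) + 1/(4*(L (k+1))^2)))^2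
        = (α k)^2 * L k / L (k+1) + 1/(4*(L (k+1))^2) := Real.sq_sqrt harg
    have hl' : L (k+1) ≠ 0 := ne_of_gt hl
    rw [hA, hαrec k]
    set s := Real.sqrt ((α k)^2 * L k / L (k+1) + 1/(4*(L (k+1))^2)) with hsdef
    field_simp at hs2 ⊢
    nlinarith [hs2]
  -- the per-step inequality
  have hstep : ∀ k, A (k+1) * φ (y (k+1)) + V (z (k+1)) u ≤
      A k * φ (y k)
        + α (k+1) * (f (x (k+1)) + ⟪fgrad (x (k+1)), u - x (k+1)⟫ + Ψ u)
        + V (z k) u := by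
    intro k
    have hl := hL (k+1)
    have ha := hαpos k
    have hal := hαL k
    have hτpos : 0 < τ k := by rw [hτ]; positivity
    have hτ1 : τ k ≤ 1 := by
      rw [hτ, div_le_one (by positivity)]; linarith
    have eA1 : A (k+1) = (α (k+1))^2 * L (k+1) := hA (k+1)
    have eA0 : A k = L (k+1) * (α (k+1))^2 - α (k+1) := eAk k
    have hApnn : 0 ≤ A (k+1) := hAnn (k+1)
    have hXQ : x (k+1) ∈ Q := by
      rw [hxrec k]
      exact hQconv (hzQ' k) (hyQ' k) hτpos.le (by linarith) (by ring)
    set g := fgrad (x (k+1)) with hg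
    -- mirror-descent inequality
    have hMD : α (k+1) * ⟪g, z (k+1) - u⟫ + α (k+1) * Ψ (z (k+1)) - α (k+1) * Ψ u ≤
        V (z k) u - V (z (k+1)) u - V (z k) (z (k+1)) := by
      set d := u - z (k+1) with hd
      have hkey : ∀ t ∈ Set.Ioc (0:ℝ) 1,
          α (k+1) * (⟪g, z (k+1) - u⟫ + Ψ (z (k+1)) - Ψ u) ≤
            (ω (z (k+1) + t • d) - ω (z (k+1))) / t - ⟪ωgrad (z k), d⟫ := by
        intro t ht
        have ht0 := ht.1
        have hvt : z (k+1) + t • d = (1 - t) • z (k+1) + t • u := by rw [hd]; module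
        have hvtQ : z (k+1) + t • d ∈ Q := by
          rw [hvt]; exact hQconv (hzQ k) hu (by linarith [ht.2]) ht0.le (by ring)
        have hmin := hzmin k (z (k+1) + t • d) hvtQ
        rw [hV, hV] at hmin
        have hΨt : Ψ (z (k+1) + t • d) ≤ (1-t) * Ψ (z (k+1)) + t * Ψ u := by
          rw [hvt]
          have := hΨconv.2 (hzQ k) hu (by linarith [ht.2] : (0:ℝ) ≤ 1 - t) ht0.le (by ring)
          simpa [smul_eq_mul] using this
        have e1 : ⟪g, z (k+1) + t • d - z k⟫ = ⟪g, z (k+1) - z k⟫ + t * ⟪g, d⟫ := by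
          rw [show z (k+1) + t • d - z k = (z (k+1) - z k) + t • d by abel,
            inner_add_right, real_inner_smul_right]
        have e2 : ⟪ωgrad (z k), z (k+1) + t • d - z k⟫
            = ⟪ωgrad (z k), z (k+1) - z k⟫ + t * ⟪ωgrad (z k), d⟫ := by
          rw [show z (k+1) + t • d - z k = (z (k+1) - z k) + t • d by abel,
            inner_add_right, real_inner_smul_right]
        have e3 : ⟪g, d⟫ = -⟪g, z (k+1) - u⟫ := by
          rw [hd, show u - z (k+1) = -(z (k+1) - u) by abel, inner_neg_right]
        have amin := mul_le_mul_of_nonneg_left hmin ha.le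
        have aΨt := mul_le_mul_of_nonneg_left hΨt ha.le
        have eb1 : α (k+1) * ((1 / α (k+1)) *
            (ω (z (k+1)) - ω (z k) - ⟪ωgrad (z k), z (k+1) - z k⟫))
            = ω (z (k+1)) - ω (z k) - ⟪ωgrad (z k), z (k+1) - z k⟫ := by
          field_simp
        have eb2 : α (k+1) * ((1 / α (k+1)) *
            (ω (z (k+1) + t • d) - ω (z k) - ⟪ωgrad (z k), z (k+1) + t • d - z k⟫))
            = ω (z (k+1) + t • d) - ω (z k) - ⟪ωgrad (z k), z (k+1) + t • d - z k⟫ := by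
          field_simp
        have ea1 : α (k+1) * ⟪g, z (k+1) + t • d - z k⟫
            = α (k+1) * ⟪g, z (k+1) - z k⟫ + α (k+1) * (t * ⟪g, d⟫) := by
          rw [e1]; ring
        have ea3 : α (k+1) * (t * ⟪g, d⟫) = -(t * (α (k+1) * ⟪g, z (k+1) - u⟫)) := by
          rw [e3]; ring
        have hfin : t * (α (k+1) * (⟪g, z (k+1) - u⟫ + Ψ (z (k+1)) - Ψ u)) ≤
            ω (z (k+1) + t • d) - ω (z (k+1)) - t * ⟪ωgrad (z k), d⟫ := by
          linarith [amin, eb1, eb2, ea1, e2, ea3, aΨt]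
        rw [le_sub_iff_add_le, le_div_iff₀ ht0]
        linarith [hfin]
      have hlim : Tendsto (fun t : ℝ =>
          (ω (z (k+1) + t • d) - ω (z (k+1))) / t - ⟪ωgrad (z k), d⟫) (𝓝[>] (0:ℝ))
          (𝓝 (⟪ωgrad (z (k+1)), d⟫ - ⟪ωgrad (z k), d⟫)) :=
        (tendsto_slope_aux (hω (z (k+1))) d).sub_const _
      have hS : α (k+1) * (⟪g, z (k+1) - u⟫ + Ψ (z (k+1)) - Ψ u) ≤
          ⟪ωgrad (z (k+1)), d⟫ - ⟪ωgrad (z k), d⟫ := by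
        refine ge_of_tendsto hlim ?_
        filter_upwards [Ioc_mem_nhdsGT zero_lt_one] with t ht
        exact hkey t ht
      rw [hV, hV, hV]
      have i1 : ⟪ωgrad (z k), u - z k⟫
          = ⟪ωgrad (z k), d⟫ + ⟪ωgrad (z k), z (k+1) - z k⟫ := by
        rw [← inner_add_right, hd]; congr 1; abel
      have i2 : ⟪ωgrad (z (k+1)), u - z (k+1)⟫ = ⟪ωgrad (z (k+1)), d⟫ := by rw [hd]
      linarith [hS, i1, i2]
    -- descent and y-minimality chain
    have h1 := hdescent k
    set v := τ k • z (k+1) + (1 - τ k) • y k with hv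
    have hvQ : v ∈ Q := hQconv (hzQ k) (hyQ' k) hτpos.le (by linarith) (by ring)
    have h2 := hymin k v hvQ
    have ev : v - x (k+1) = τ k • (z (k+1) - z k) := by rw [hv, hxrec k]; module
    have hinner2 : ⟪g, v - x (k+1)⟫ = τ k * ⟪g, z (k+1) - z k⟫ := by
      rw [ev, real_inner_smul_right]
    have hnorm2 : ‖v - x (k+1)‖^2 = (τ k)^2 * ‖z (k+1) - z k‖^2 := by
      rw [ev, norm_smul, mul_pow, Real.norm_eq_abs, sq_abs]
    have h4 : Ψ v ≤ τ k * Ψ (z (k+1)) + (1 - τ k) * Ψ (y k) := by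
      have := hΨconv.2 (hzQ k) (hyQ' k) hτpos.le (by linarith : (0:ℝ) ≤ 1 - τ k) (by ring)
      simpa [smul_eq_mul] using this
    rw [hinner2, hnorm2] at h2
    have chain : f (y (k+1)) + Ψ (y (k+1)) ≤
        f (x (k+1)) + τ k * ⟪g, z (k+1) - z k⟫
          + (L (k+1)/2) * ((τ k)^2 * ‖z (k+1) - z k‖^2)
          + (τ k * Ψ (z (k+1)) + (1 - τ k) * Ψ (y k)) := by
      linarith [h1, h2, h4]
    have chainA := mul_le_mul_of_nonneg_left chain hApnn
    have e1 : A (k+1) * τ k = α (k+1) := by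
      rw [eA1, hτ]; field_simp
    have e2 : A (k+1) * ((L (k+1)/2) * (τ k)^2) = 1/2 := by
      rw [eA1, hτ]; field_simp
    have e3 : A (k+1) * (1 - τ k) = A k := by
      rw [eA1, hτ, eA0]; field_simp
    have e4 : α (k+1) * (1 - τ k) = A k * τ k := by
      rw [hτ, eA0]; field_simp
    have chainA' : A (k+1) * (f (y (k+1)) + Ψ (y (k+1))) ≤
        A (k+1) * f (x (k+1)) + α (k+1) * ⟪g, z (k+1) - z k⟫
          + (1/2) * ‖z (k+1) - z k‖^2 + α (k+1) * Ψ (z (k+1)) + A k * Ψ (y k) := by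
      calc A (k+1) * (f (y (k+1)) + Ψ (y (k+1))) ≤
          A (k+1) * (f (x (k+1)) + τ k * ⟪g, z (k+1) - z k⟫
            + (L (k+1)/2) * ((τ k)^2 * ‖z (k+1) - z k‖^2)
            + (τ k * Ψ (z (k+1)) + (1 - τ k) * Ψ (y k))) := chainA
        _ = A (k+1) * f (x (k+1)) + α (k+1) * ⟪g, z (k+1) - z k⟫
            + (1/2) * ‖z (k+1) - z k‖^2 + α (k+1) * Ψ (z (k+1)) + A k * Ψ (y k) := by
          linear_combination (⟪g, z (k+1) - z k⟫ + Ψ (z (k+1))) * e1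
            + ‖z (k+1) - z k‖^2 * e2 + Ψ (y k) * e3
    have h5' : (1/2) * ‖z (k+1) - z k‖^2 ≤ V (z k) (z (k+1)) := by
      have := hωstrong (z k) (hzQ' k) (z (k+1)) (hzQ k)
      rw [hV]; linarith
    have e5s : α (k+1) * ⟪g, z (k+1) - u⟫
        = α (k+1) * ⟪g, z (k+1) - z k⟫ - α (k+1) * ⟪g, u - z k⟫ := by
      rw [show z (k+1) - u = (z (k+1) - z k) - (u - z k) by abel, inner_sub_right]
      ring
    have h6 : f (x (k+1)) + ⟪g, y k - x (k+1)⟫ ≤ f (y k) :=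
      grad_convex hfconv (hf (x (k+1))) hXQ (hyQ' k)
    have e6 : ⟪g, y k - x (k+1)⟫ = τ k * ⟪g, y k - z k⟫ := by
      rw [show y k - x (k+1) = τ k • (y k - z k) by rw [hxrec k]; module,
        real_inner_smul_right]
    rw [e6] at h6
    have h6A := mul_le_mul_of_nonneg_left h6 (hAnn k)
    have eGux : α (k+1) * ⟪g, u - x (k+1)⟫
        = α (k+1) * ⟪g, u - z k⟫ - α (k+1) * ((1 - τ k) * ⟪g, y k - z k⟫) := by
      rw [show u - x (k+1) = (u - z k) - (1 - τ k) • (y k - z k) by rw [hxrec k]; module,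
        inner_sub_right, real_inner_smul_right]
      ring
    have e4s : α (k+1) * ((1 - τ k) * ⟪g, y k - z k⟫)
        = A k * (τ k * ⟪g, y k - z k⟫) := by
      linear_combination ⟪g, y k - z k⟫ * e4
    have eAsum : A (k+1) = A k + α (k+1) := by rw [eA1, eA0]; ring
    have eAFX : A (k+1) * f (x (k+1)) = A k * f (x (k+1)) + α (k+1) * f (x (k+1)) := by
      rw [eAsum]; ring
    rw [hφ, hφ]
    linarith [chainA', hMD, h5', h6A, e5s, eGux, e4s, eAFX]
  -- telescoping
  have hV0 : ∀ m, 0 ≤ V (z m) u := by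
    intro m
    have := hωstrong (z m) (hzQ' m) u hu
    rw [hV]
    linarith [sq_nonneg ‖u - z m‖]
  have key : ∀ n, A n * φ (y n) + V (z n) u ≤
      (∑ k ∈ Finset.Icc 1 n, α k * (f (x k) + ⟪fgrad (x k), u - x k⟫ + Ψ u))
        + V (z 0) u := by
    intro n
    induction n with
    | zero => simp [hA, hα0]
    | succ m ih =>
      have h := hstep m
      rw [Finset.sum_Icc_succ_top (by omega : 1 ≤ m + 1)]
      linarith [h, ih]
  linarith [key T, hV0 T]
end

section
/- For the iterates of the adaptive accelerated gradient method described in the context, for every T ≥ 1 and every u ∈ Q: φ(y_T) ≤ φ(u) + V_{z_0}(u)/A_T, where A_T = α_T² L_T. -/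
open RealInnerProductSpace Filter Topology

private lemma line_slope {H : Type*} [NormedAddCommGroup H] [InnerProductSpace ℝ H] [CompleteSpace H]
    {ω : H → ℝ} {g x : H} (hω : HasGradientAt ω g x) (d : H) :
    Tendsto (fun t : ℝ => (ω (x + t • d) - ω x) / t) (𝓝[>] (0:ℝ)) (𝓝 ⟪g, d⟫) := by
  have h1 : HasDerivAt (fun t : ℝ => x + t • d) d 0 := by
    simpa using ((hasDerivAt_id (0:ℝ)).smul_const d).const_add x
  have h2 : HasDerivAt (fun t : ℝ => ω (x + t • d)) ⟪g, d⟫ 0 := by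
    have hfd : HasFDerivAt ω ((InnerProductSpace.toDual ℝ H) g) (x + (0:ℝ) • d) := by
      simpa using hω.hasFDerivAt
    have := hfd.comp_hasDerivAt 0 h1
    simp at this
    exact this
  have h3 := hasDerivAt_iff_tendsto_slope.1 h2
  have h4 : Tendsto (slope (fun t : ℝ => ω (x + t • d)) 0) (𝓝[>] (0:ℝ)) (𝓝 ⟪g, d⟫) :=
    h3.mono_left (nhdsWithin_mono _ (fun t ht => by simpa using ne_of_gt ht))
  refine h4.congr (fun t => ?_)
  simp [slope_def_field, div_eq_mul_inv]

private lemma grad_convex_ineq {H : Type*} [NormedAddCommGroup H] [InnerProductSpace ℝ H]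
    [CompleteSpace H]
    {Q : Set H} {f : H → ℝ} {g : H → H} (hf : ∀ x, HasGradientAt f (g x) x)
    (hconv : ConvexOn ℝ Q f) {x w : H} (hx : x ∈ Q) (hw : w ∈ Q) :
    f x + ⟪g x, w - x⟫ ≤ f w := by
  have hlim := line_slope (hf x) (w - x)
  have hbound : ∀ᶠ t in 𝓝[>] (0:ℝ), (f (x + t • (w - x)) - f x) / t ≤ f w - f x := by
    filter_upwards [Ioc_mem_nhdsGT_of_mem (Set.left_mem_Ico.2 one_pos)] with t ht
    have hpt : x + t • (w - x) = (1 - t) • x + t • w := by module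
    have h := hconv.2 hx hw (by linarith [ht.2] : (0:ℝ) ≤ 1 - t) ht.1.le (by ring)
    rw [← hpt] at h
    rw [smul_eq_mul, smul_eq_mul] at h
    rw [div_le_iff₀ ht.1]
    nlinarith [h]
  have := le_of_tendsto hlim hbound
  linarith

private lemma prox_three_point {H : Type*} [NormedAddCommGroup H] [InnerProductSpace ℝ H]
    [CompleteSpace H]
    {Q : Set H} (hQconv : Convex ℝ Q)
    {Ψ ω : H → ℝ} {ωgrad : H → H} (hω : ∀ x, HasGradientAt ω (ωgrad x) x)
    (hΨconv : ConvexOn ℝ Q Ψ)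
    {g : H} {a : ℝ} (ha : 0 < a)
    {zk z' u : H} (hz' : z' ∈ Q) (hu : u ∈ Q)
    (V : H → H → ℝ)
    (hV : ∀ p q, V p q = ω q - ω p - ⟪ωgrad p, q - p⟫)
    (hmin : ∀ v ∈ Q, ⟪g, z' - zk⟫ + (1/a) * V zk z' + Ψ z' ≤
        ⟪g, v - zk⟫ + (1/a) * V zk v + Ψ v) :
    ⟪g, z' - zk⟫ + (1/a) * V zk z' + Ψ z' + (1/a) * V z' u ≤
      ⟪g, u - zk⟫ + (1/a) * V zk u + Ψ u := by
  set d := u - z' with hd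
  set C : ℝ := (⟪g, z' - zk⟫ + (1/a) * V zk z' + Ψ z' + (1/a) * V z' u)
      - (⟪g, u - zk⟫ + (1/a) * V zk u + Ψ u) with hC
  suffices hC0 : C ≤ 0 by rw [hC] at hC0; linarith
  have hbound : ∀ᶠ t in 𝓝[>] (0:ℝ),
      C ≤ (1/a) * ((ω (z' + t • d) - ω z') / t - ⟪ωgrad z', d⟫) := by
    filter_upwards [Ioc_mem_nhdsGT_of_mem (Set.left_mem_Ico.2 one_pos)] with t ht
    set m := z' + t • d with hm
    have hmQ : m ∈ Q := by
      have hpt : m = (1 - t) • z' + t • u := by rw [hm, hd]; module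
      rw [hpt]
      exact hQconv hz' hu (by linarith [ht.2]) ht.1.le (by ring)
    have hmin' := hmin m hmQ
    have eΨ : Ψ m ≤ (1 - t) * Ψ z' + t * Ψ u := by
      have hpt : m = (1 - t) • z' + t • u := by rw [hm, hd]; module
      have := hΨconv.2 hz' hu (by linarith [ht.2] : (0:ℝ) ≤ 1 - t) ht.1.le (by ring)
      rw [← hpt] at this; simpa [smul_eq_mul] using this
    have e1 : ⟪g, m - zk⟫ = ⟪g, z' - zk⟫ + t * ⟪g, d⟫ := by
      have : m - zk = (z' - zk) + t • d := by rw [hm]; abel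
      rw [this, inner_add_right, real_inner_smul_right]
    have e2 : ⟪ωgrad zk, m - zk⟫ = ⟪ωgrad zk, z' - zk⟫ + t * ⟪ωgrad zk, d⟫ := by
      have : m - zk = (z' - zk) + t • d := by rw [hm]; abel
      rw [this, inner_add_right, real_inner_smul_right]
    have e3 : ⟪g, u - zk⟫ = ⟪g, z' - zk⟫ + ⟪g, d⟫ := by
      have : u - zk = (z' - zk) + d := by rw [hd]; abel
      rw [this, inner_add_right]
    have e4 : ⟪ωgrad zk, u - zk⟫ = ⟪ωgrad zk, z' - zk⟫ + ⟪ωgrad zk, d⟫ := by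
      have : u - zk = (z' - zk) + d := by rw [hd]; abel
      rw [this, inner_add_right]
    rw [hV zk z', hV zk m] at hmin'
    have hCval : t * C ≤ (1/a) * (ω m - ω z' - t * ⟪ωgrad z', d⟫) := by
      rw [hC, hV zk z', hV zk u, hV z' u, e3, e4]
      have ha' : (0:ℝ) < 1/a := by positivity
      nlinarith [hmin', eΨ, e1, e2, mul_le_mul_of_nonneg_left eΨ ha'.le]
    have hstep : C ≤ (1/a) * (ω m - ω z' - t * ⟪ωgrad z', d⟫) / t := by
      rw [le_div_iff₀ ht.1, mul_comm]; exact hCval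
    calc C ≤ (1/a) * (ω m - ω z' - t * ⟪ωgrad z', d⟫) / t := hstep
      _ = (1/a) * ((ω m - ω z') / t - ⟪ωgrad z', d⟫) := by
          rw [mul_div_assoc]; congr 1; rw [sub_div]
          rw [mul_div_cancel_left₀ _ (ne_of_gt ht.1)]
  have hlim : Tendsto (fun t : ℝ => (1/a) * ((ω (z' + t • d) - ω z') / t - ⟪ωgrad z', d⟫))
      (𝓝[>] (0:ℝ)) (𝓝 0) := by
    have := (line_slope (hω z') d).sub_const ⟪ωgrad z', d⟫
    simpa using this.const_mul (1/a)
  exact ge_of_tendsto hlim hbound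

/-- Convergence estimate for the adaptive accelerated composite gradient method:
for every `T ≥ 1` and every `u ∈ Q`, `φ(y_T) ≤ φ(u) + V_{z_0}(u) / A_T`,
where `A_T = α_T² L_T`. -/
theorem stmt8
    {H : Type*} [NormedAddCommGroup H] [InnerProductSpace ℝ H] [CompleteSpace H]
    (Q : Set H) (hQne : Q.Nonempty) (hQclosed : IsClosed Q) (hQconv : Convex ℝ Q)
    (f Ψ ω : H → ℝ) (fgrad ωgrad : H → H)
    (hf : ∀ x, HasGradientAt f (fgrad x) x)
    (hω : ∀ x, HasGradientAt ω (ωgrad x) x)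
    (hfconv : ConvexOn ℝ Q f) (hΨconv : ConvexOn ℝ Q Ψ)
    (hωstrong : ∀ a ∈ Q, ∀ b ∈ Q,
      ω a + ⟪ωgrad a, b - a⟫ + (1 / 2) * ‖b - a‖ ^ 2 ≤ ω b)
    (V : H → H → ℝ)
    (hV : ∀ a b, V a b = ω b - ω a - ⟪ωgrad a, b - a⟫)
    (φ : H → ℝ) (hφ : ∀ v, φ v = f v + Ψ v)
    (L : ℕ → ℝ) (hL : ∀ k, 0 < L k)
    (α : ℕ → ℝ) (hα0 : α 0 = 0)
    (hαrec : ∀ k, α (k + 1) =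
      Real.sqrt ((α k) ^ 2 * L k / L (k + 1) + 1 / (4 * (L (k + 1)) ^ 2))
        + 1 / (2 * L (k + 1)))
    (τ : ℕ → ℝ) (hτ : ∀ k, τ k = 1 / (α (k + 1) * L (k + 1)))
    (A : ℕ → ℝ) (hA : ∀ k, A k = (α k) ^ 2 * L k)
    (x y z : ℕ → H)
    (hx0 : x 0 ∈ Q) (hy0 : y 0 = x 0) (hz0 : z 0 = x 0)
    (hxrec : ∀ k, x (k + 1) = τ k • z k + (1 - τ k) • y k)
    (hyQ : ∀ k, y (k + 1) ∈ Q)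
    (hymin : ∀ k, ∀ v ∈ Q,
      ⟪fgrad (x (k + 1)), y (k + 1) - x (k + 1)⟫
          + (L (k + 1) / 2) * ‖y (k + 1) - x (k + 1)‖ ^ 2 + Ψ (y (k + 1)) ≤
        ⟪fgrad (x (k + 1)), v - x (k + 1)⟫
          + (L (k + 1) / 2) * ‖v - x (k + 1)‖ ^ 2 + Ψ v)
    (hzQ : ∀ k, z (k + 1) ∈ Q)
    (hzmin : ∀ k, ∀ v ∈ Q,
      ⟪fgrad (x (k + 1)), z (k + 1) - z k⟫
          + (1 / α (k + 1)) * V (z k) (z (k + 1)) + Ψ (z (k + 1)) ≤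
        ⟪fgrad (x (k + 1)), v - z k⟫ + (1 / α (k + 1)) * V (z k) v + Ψ v)
    (hdescent : ∀ k, f (y (k + 1)) ≤
      f (x (k + 1)) + ⟪fgrad (x (k + 1)), y (k + 1) - x (k + 1)⟫
        + (L (k + 1) / 2) * ‖y (k + 1) - x (k + 1)‖ ^ 2)
    (T : ℕ) (hT : 1 ≤ T) (u : H) (hu : u ∈ Q) :
    φ (y T) ≤ φ u + V (z 0) u / A T := by
  -- basic facts about the scalar sequences
  have hαpos : ∀ k, 0 < α (k + 1) := by
    intro k
    rw [hαrec k]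
    have h1 : (0:ℝ) < 1 / (2 * L (k + 1)) := by have := hL (k + 1); positivity
    have h2 := Real.sqrt_nonneg ((α k) ^ 2 * L k / L (k + 1) + 1 / (4 * (L (k + 1)) ^ 2))
    linarith
  have hAnonneg : ∀ k, 0 ≤ A k := by
    intro k; rw [hA]; have := hL k; positivity
  have hArec : ∀ k, A (k + 1) = A k + α (k + 1) := by
    intro k
    have hLp := hL (k + 1)
    have hLk := hL k
    have harg : 0 ≤ (α k) ^ 2 * L k / L (k + 1) + 1 / (4 * (L (k + 1)) ^ 2) := by positivity
    rw [hA, hA, hαrec k]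
    set s := Real.sqrt ((α k) ^ 2 * L k / L (k + 1) + 1 / (4 * (L (k + 1)) ^ 2)) with hs
    have hs2 : s ^ 2 = (α k) ^ 2 * L k / L (k + 1) + 1 / (4 * (L (k + 1)) ^ 2) :=
      Real.sq_sqrt harg
    have hne : L (k + 1) ≠ 0 := ne_of_gt hLp
    field_simp at hs2 ⊢
    linear_combination hs2
  have hαL : ∀ k, 1 ≤ α (k + 1) * L (k + 1) := by
    intro k
    have hLp := hL (k + 1)
    have hLk := hL k
    have h0 : (0:ℝ) ≤ (α k) ^ 2 * L k / L (k + 1) := by positivity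
    have h1 : Real.sqrt (1 / (4 * (L (k + 1)) ^ 2))
        ≤ Real.sqrt ((α k) ^ 2 * L k / L (k + 1) + 1 / (4 * (L (k + 1)) ^ 2)) :=
      Real.sqrt_le_sqrt (by linarith)
    have h2 : Real.sqrt (1 / (4 * (L (k + 1)) ^ 2)) = 1 / (2 * L (k + 1)) := by
      rw [show 1 / (4 * (L (k + 1)) ^ 2) = (1 / (2 * L (k + 1))) ^ 2 by
        field_simp; ring]
      exact Real.sqrt_sq (by positivity)
    have h3 : 1 / L (k + 1) ≤ α (k + 1) := by
      rw [hαrec k]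
      rw [h2] at h1
      have : 1 / L (k + 1) = 1 / (2 * L (k + 1)) + 1 / (2 * L (k + 1)) := by
        field_simp; ring
      linarith
    calc (1:ℝ) = (1 / L (k + 1)) * L (k + 1) := by field_simp
      _ ≤ α (k + 1) * L (k + 1) := mul_le_mul_of_nonneg_right h3 hLp.le
  have hτpos : ∀ k, 0 < τ k := by
    intro k; rw [hτ]
    exact one_div_pos.2 (mul_pos (hαpos k) (hL (k + 1)))
  have hτle : ∀ k, τ k ≤ 1 := by
    intro k; rw [hτ]
    rw [div_le_one (mul_pos (hαpos k) (hL (k + 1)))]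
    exact hαL k
  have hyQ' : ∀ k, y k ∈ Q := by
    intro k; cases k with
    | zero => rw [hy0]; exact hx0
    | succ n => exact hyQ n
  have hzQ' : ∀ k, z k ∈ Q := by
    intro k; cases k with
    | zero => rw [hz0]; exact hx0
    | succ n => exact hzQ n
  have hxQ : ∀ k, x (k + 1) ∈ Q := by
    intro k; rw [hxrec]
    exact hQconv (hzQ' k) (hyQ' k) (hτpos k).le (by linarith [hτle k]) (by ring)
  have hApos : ∀ k, 0 < A (k + 1) := by
    intro k; rw [hA]
    have := hαpos k; have := hL (k + 1); positivity
  -- the per-step estimate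
  have hstep : ∀ k, A (k + 1) * φ (y (k + 1)) + V (z (k + 1)) u ≤
      A k * φ (y k) + α (k + 1) * φ u + V (z k) u := by
    intro k
    have hLp := hL (k + 1)
    have hαp := hαpos k
    have hτp := hτpos k
    have hτ1 := hτle k
    have hxk := hxQ k
    have hyk := hyQ' k
    have hzk := hzQ' k
    have hz' := hzQ k
    set g : H := fgrad (x (k + 1)) with hg
    set v : H := τ k • z (k + 1) + (1 - τ k) • y k with hv
    have hvQ : v ∈ Q := hQconv hz' hyk hτp.le (by linarith) (by ring)
    have h2 := hymin k v hvQ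
    have hvx : v - x (k + 1) = τ k • (z (k + 1) - z k) := by rw [hv, hxrec]; module
    rw [hvx] at h2
    have e1 : ⟪g, τ k • (z (k + 1) - z k)⟫ = τ k * ⟪g, z (k + 1) - z k⟫ :=
      real_inner_smul_right _ _ _
    have e2 : ‖τ k • (z (k + 1) - z k)‖ ^ 2 = τ k ^ 2 * ‖z (k + 1) - z k‖ ^ 2 := by
      rw [norm_smul, mul_pow, Real.norm_eq_abs, sq_abs]
    rw [e1, e2] at h2
    have eΨ : Ψ v ≤ τ k * Ψ (z (k + 1)) + (1 - τ k) * Ψ (y k) := by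
      have := hΨconv.2 hz' hyk hτp.le (by linarith : (0:ℝ) ≤ 1 - τ k)
        (by ring : τ k + (1 - τ k) = 1)
      simpa only [smul_eq_mul] using this
    have hsc : (1/2 : ℝ) * ‖z (k + 1) - z k‖ ^ 2 ≤ V (z k) (z (k + 1)) := by
      have := hωstrong (z k) hzk (z (k + 1)) hz'
      rw [hV]; linarith
    have hτα : τ k * L (k + 1) = 1 / α (k + 1) := by
      rw [hτ]; field_simp
    have h7 := prox_three_point hQconv hω hΨconv hαp hz' hu V hV (fun w hw => hzmin k w hw)
    have h8u := grad_convex_ineq hf hfconv hxk hu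
    have h8y := grad_convex_ineq hf hfconv hxk hyk
    have hid : τ k • (u - z k) = τ k • (u - x (k + 1)) + (1 - τ k) • (y k - x (k + 1)) := by
      rw [hxrec]; module
    have hid' : τ k * ⟪g, u - z k⟫
        = τ k * ⟪g, u - x (k + 1)⟫ + (1 - τ k) * ⟪g, y k - x (k + 1)⟫ := by
      have h := congrArg (fun w => (⟪g, w⟫ : ℝ)) hid
      simpa [inner_add_right, real_inner_smul_right] using h
    have key : φ (y (k + 1)) ≤ (1 - τ k) * φ (y k) + τ k * φ u
        + τ k * (1 / α (k + 1)) * (V (z k) u - V (z (k + 1)) u) := by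
      have hd := hdescent k
      have c3 : L (k + 1) / 2 * (τ k ^ 2 * ‖z (k + 1) - z k‖ ^ 2)
          ≤ τ k * (1 / α (k + 1)) * V (z k) (z (k + 1)) := by
        have hpos : (0:ℝ) ≤ τ k * (1 / α (k + 1)) := by positivity
        have hmul := mul_le_mul_of_nonneg_left hsc hpos
        have heq : L (k + 1) / 2 * (τ k ^ 2 * ‖z (k + 1) - z k‖ ^ 2)
            = τ k * (1 / α (k + 1)) * ((1/2 : ℝ) * ‖z (k + 1) - z k‖ ^ 2) := by
          rw [← hτα]; ring
        linarith [heq.le, heq.ge]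
      have c4 := mul_le_mul_of_nonneg_left h7 hτp.le
      have c5u := mul_le_mul_of_nonneg_left h8u hτp.le
      have c5y := mul_le_mul_of_nonneg_left h8y (by linarith : (0:ℝ) ≤ 1 - τ k)
      rw [hφ, hφ, hφ]
      linarith [h2, hd, eΨ, c3, c4, c5u, c5y, hid']
    have hm := mul_le_mul_of_nonneg_left key (hApos k).le
    have hAτ : A (k + 1) * τ k = α (k + 1) := by
      rw [hA, hτ]; field_simp
    have hA1τ : A (k + 1) * (1 - τ k) = A k := by
      have h := hArec k
      have : A (k + 1) * (1 - τ k) = A (k + 1) - A (k + 1) * τ k := by ring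
      rw [this, hAτ, h]; ring
    have hAτα : A (k + 1) * (τ k * (1 / α (k + 1))) = 1 := by
      rw [show A (k + 1) * (τ k * (1 / α (k + 1)))
          = (A (k + 1) * τ k) * (1 / α (k + 1)) by ring, hAτ]
      field_simp
    have e5 : A (k + 1) * ((1 - τ k) * φ (y k)) = A k * φ (y k) := by
      rw [← mul_assoc, hA1τ]
    have e6 : A (k + 1) * (τ k * φ u) = α (k + 1) * φ u := by
      rw [← mul_assoc, hAτ]
    have e7 : A (k + 1) * (τ k * (1 / α (k + 1)) * (V (z k) u - V (z (k + 1)) u))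
        = V (z k) u - V (z (k + 1)) u := by
      rw [← mul_assoc, hAτα, one_mul]
    linarith [hm, e5, e6, e7]
  -- telescoping
  have hsum : ∀ k, A k * φ (y k) + V (z k) u ≤ A k * φ u + V (z 0) u := by
    intro k
    induction k with
    | zero =>
      have hA0 : A 0 = 0 := by rw [hA, hα0]; ring
      rw [hA0]; simp
    | succ n ih =>
      have h1 := hstep n
      have h2 := hArec n
      have h3 : A (n + 1) * φ u = A n * φ u + α (n + 1) * φ u := by rw [h2]; ring
      linarith [h1, ih, h3]
  -- conclusion
  obtain ⟨T', rfl⟩ : ∃ T', T = T' + 1 := ⟨T - 1, (Nat.succ_pred_eq_of_pos hT).symm⟩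
  have hAT := hApos T'
  have hVpos : 0 ≤ V (z (T' + 1)) u := by
    have := hωstrong (z (T' + 1)) (hzQ T') u hu
    rw [hV]
    linarith [this, sq_nonneg ‖u - z (T' + 1)‖]
  have hsumT := hsum (T' + 1)
  have h2 : (φ (y (T' + 1)) - φ u) * A (T' + 1) ≤ V (z 0) u := by
    have e : (φ (y (T' + 1)) - φ u) * A (T' + 1)
        = A (T' + 1) * φ (y (T' + 1)) - A (T' + 1) * φ u := by ring
    linarith [hsumT, e.le, e.ge]
  have h3 : φ (y (T' + 1)) - φ u ≤ V (z 0) u / A (T' + 1) := by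
    rw [le_div_iff₀ hAT]; exact h2
  linarith
end

section
/- The total number of inner-loop trials after the first k+1 outer iterations satisfies ∑_{j=0}^{k} (m_j + 1) ≤ 2(k+1) + log₂(L_{k+1}/L_0); consequently the total number N_k = 2∑_{j=0}^{k}(m_j + 1) of function evaluations satisfies N_k ≤ 4(k+1) + 2 log₂(L_{k+1}/L_0). -/
/-- Complexity of the backtracking line search in the adaptive accelerated gradient
method: with `L 0 = L₀ > 0` and `L (j+1) = 2^(m j) * max L₀ (L j / 2)`, where `m j`
is the number of doublings at outer iteration `j` (each of the `m j + 1` trials costs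
two evaluations of `f`), the total number of trials after the first `k + 1` outer
iterations satisfies `∑_{j=0}^{k} (m j + 1) ≤ 2(k+1) + log₂(L (k+1) / L₀)`;
consequently the total number `N_k = 2 ∑_{j=0}^{k} (m j + 1)` of function evaluations
satisfies `N_k ≤ 4(k+1) + 2 log₂(L (k+1) / L₀)`. -/
theorem stmt10 (L0 : ℝ) (hL0 : 0 < L0) (m : ℕ → ℕ) (L : ℕ → ℝ)
    (hLinit : L 0 = L0)
    (hLrec : ∀ j, L (j + 1) = 2 ^ (m j) * max L0 (L j / 2)) (k : ℕ) :
    (∑ j ∈ Finset.range (k + 1), ((m j : ℝ) + 1))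
        ≤ 2 * ((k : ℝ) + 1) + Real.logb 2 (L (k + 1) / L0) ∧
    2 * (∑ j ∈ Finset.range (k + 1), ((m j : ℝ) + 1))
        ≤ 4 * ((k : ℝ) + 1) + 2 * Real.logb 2 (L (k + 1) / L0) := by
  have hLpos : ∀ j, 0 < L j := by
    intro j
    induction j with
    | zero => simpa [hLinit] using hL0
    | succ n ih =>
      rw [hLrec n]
      positivity
  have key : ∀ j, (m j : ℝ) + 1 ≤ 2 + (Real.logb 2 (L (j + 1)) - Real.logb 2 (L j)) := by
    intro j
    have h1 : (2 : ℝ) ^ (m j) * (L j / 2) ≤ L (j + 1) := by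
      rw [hLrec j]
      gcongr
      exact le_max_right _ _
    have h2 : Real.logb 2 ((2 : ℝ) ^ (m j) * (L j / 2)) ≤ Real.logb 2 (L (j + 1)) :=
      Real.logb_le_logb_of_le (by norm_num) (by have := hLpos j; positivity) h1
    have h3 : Real.logb 2 ((2 : ℝ) ^ (m j) * (L j / 2))
        = (m j : ℝ) + (Real.logb 2 (L j) - 1) := by
      rw [Real.logb_mul (by positivity) (by have := hLpos j; positivity),
        Real.logb_div (ne_of_gt (hLpos j)) (by norm_num)]
      rw [show ((2:ℝ) ^ m j) = (2:ℝ) ^ (m j) from rfl, Real.logb_pow]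
      simp [Real.logb_self_eq_one]
    linarith [h2, h3 ▸ h2]
  have hsum : (∑ j ∈ Finset.range (k + 1), ((m j : ℝ) + 1))
      ≤ ∑ j ∈ Finset.range (k + 1),
        (2 + (Real.logb 2 (L (j + 1)) - Real.logb 2 (L j))) :=
    Finset.sum_le_sum fun j _ => key j
  rw [show (∑ j ∈ Finset.range (k + 1),
        (2 + (Real.logb 2 (L (j + 1)) - Real.logb 2 (L j))))
      = 2 * ((k:ℝ) + 1) + (Real.logb 2 (L (k + 1)) - Real.logb 2 (L 0)) by
    rw [Finset.sum_add_distrib, Finset.sum_const, Finset.sum_range_sub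
      (fun j => Real.logb 2 (L j))]
    simp [Finset.card_range]
    ring] at hsum
  have hdiv : Real.logb 2 (L (k + 1) / L0)
      = Real.logb 2 (L (k + 1)) - Real.logb 2 (L 0) := by
    rw [Real.logb_div (ne_of_gt (hLpos (k + 1))) (ne_of_gt hL0), hLinit]
  have h1 : (∑ j ∈ Finset.range (k + 1), ((m j : ℝ) + 1))
      ≤ 2 * ((k : ℝ) + 1) + Real.logb 2 (L (k + 1) / L0) := by
    rw [hdiv]
    linarith
  exact ⟨h1, by linarith⟩
end

section
/- Let γ > 0 and suppose each θ_p ∈ {0,1}^E has at most l_w nonzero entries for p ∈ P_w, where l_w ≥ 1. Then the convex function ψ_γ : ℝ^E → ℝ, ψ_γ(t) = ∑_{w ∈ W} d_w · γ · ln( ∑_{p ∈ P_w} exp(−⟨θ_p, t⟩/γ) ), has a Lipschitz-continuous gradient with respect to the Euclidean norm with constant L = (1/γ) ∑_{w ∈ W} d_w · l_w², i.e. ‖∇ψ_γ(t) − ∇ψ_γ(t′)‖₂ ≤ L‖t − t′‖₂ for all t, t′ ∈ ℝ^E. -/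
open RealInnerProductSpace

set_option maxHeartbeats 1000000

open Finset Real

open Finset Real

/-- weighted second moment of centered variable:  ∑ σ (A - Ā)² = ∑ σ A² - Ā². -/
lemma cent_sq {ι : Type*} [Fintype ι] (σ A : ι → ℝ) (hσ1 : ∑ p, σ p = 1) :
    ∑ p, σ p * (A p - ∑ q, σ q * A q) ^ 2
      = ∑ p, σ p * A p ^ 2 - (∑ q, σ q * A q) ^ 2 := by
  set m := ∑ q, σ q * A q with hm
  have : ∀ p, σ p * (A p - m) ^ 2 = σ p * A p ^ 2 - 2 * m * (σ p * A p) + m ^ 2 * σ p := by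
    intro p; ring
  rw [Finset.sum_congr rfl fun p _ => this p, Finset.sum_add_distrib, Finset.sum_sub_distrib,
    ← Finset.mul_sum, ← Finset.mul_sum, hσ1]
  ring

/-- decorrelation: ∑ σ (A - Ā) B = ∑ σ (A - Ā)(B - B̄). -/
lemma cent_mul {ι : Type*} [Fintype ι] (σ A B : ι → ℝ) (hσ1 : ∑ p, σ p = 1) :
    ∑ p, σ p * (A p - ∑ q, σ q * A q) * B p
      = ∑ p, σ p * ((A p - ∑ q, σ q * A q) * (B p - ∑ q, σ q * B q)) := by
  set mA := ∑ q, σ q * A q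
  set mB := ∑ q, σ q * B q
  have : ∀ p, σ p * ((A p - mA) * (B p - mB))
      = σ p * (A p - mA) * B p - mB * (σ p * A p) + (mB * mA) * σ p := by
    intro p; ring
  rw [Finset.sum_congr rfl fun p _ => this p, Finset.sum_add_distrib, Finset.sum_sub_distrib,
    ← Finset.mul_sum, ← Finset.mul_sum, hσ1]
  ring

lemma cov_sq_le {ι : Type*} [Fintype ι] (σ A B : ι → ℝ) (hσ0 : ∀ p, 0 ≤ σ p) :
    (∑ p, σ p * ((A p - ∑ q, σ q * A q) * (B p - ∑ q, σ q * B q))) ^ 2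
      ≤ (∑ p, σ p * (A p - ∑ q, σ q * A q) ^ 2) * ∑ p, σ p * (B p - ∑ q, σ q * B q) ^ 2 := by
  set a := fun p => Real.sqrt (σ p) * (A p - ∑ q, σ q * A q)
  set b := fun p => Real.sqrt (σ p) * (B p - ∑ q, σ q * B q)
  have key := Finset.sum_mul_sq_le_sq_mul_sq Finset.univ a b
  have h1 : ∀ p, a p * b p = σ p * ((A p - ∑ q, σ q * A q) * (B p - ∑ q, σ q * B q)) := by
    intro p
    simp only [a, b]
    rw [show Real.sqrt (σ p) * (A p - ∑ q, σ q * A q) * (Real.sqrt (σ p) * (B p - ∑ q, σ q * B q))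
        = (Real.sqrt (σ p) * Real.sqrt (σ p)) * ((A p - ∑ q, σ q * A q) * (B p - ∑ q, σ q * B q)) by ring,
      Real.mul_self_sqrt (hσ0 p)]
  have h2 : ∀ p, a p ^ 2 = σ p * (A p - ∑ q, σ q * A q) ^ 2 := by
    intro p; simp only [a, mul_pow, Real.sq_sqrt (hσ0 p)]
  have h3 : ∀ p, b p ^ 2 = σ p * (B p - ∑ q, σ q * B q) ^ 2 := by
    intro p; simp only [b, mul_pow, Real.sq_sqrt (hσ0 p)]
  simpa only [h1, h2, h3] using key

/-- main covariance bound. -/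
lemma cov_bound {ι : Type*} [Fintype ι] (σ A B : ι → ℝ) (hσ0 : ∀ p, 0 ≤ σ p)
    (hσ1 : ∑ p, σ p = 1) {a b : ℝ} (ha : 0 ≤ a) (hb : 0 ≤ b)
    (hA : ∀ p, |A p| ≤ a) (hB : ∀ p, |B p| ≤ b) :
    |∑ p, σ p * (A p - ∑ q, σ q * A q) * B p| ≤ a * b := by
  rw [cent_mul σ A B hσ1]
  have hA2 : ∑ p, σ p * (A p - ∑ q, σ q * A q) ^ 2 ≤ a ^ 2 := by
    rw [cent_sq σ A hσ1]
    have : ∑ p, σ p * A p ^ 2 ≤ a ^ 2 := by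
      calc ∑ p, σ p * A p ^ 2 ≤ ∑ p, σ p * a ^ 2 := by
            apply Finset.sum_le_sum; intro p _
            exact mul_le_mul_of_nonneg_left (by
              have := hA p; nlinarith [abs_nonneg (A p), sq_abs (A p)]) (hσ0 p)
        _ = a ^ 2 := by rw [← Finset.sum_mul, hσ1, one_mul]
    nlinarith [sq_nonneg (∑ q, σ q * A q)]
  have hB2 : ∑ p, σ p * (B p - ∑ q, σ q * B q) ^ 2 ≤ b ^ 2 := by
    rw [cent_sq σ B hσ1]
    have : ∑ p, σ p * B p ^ 2 ≤ b ^ 2 := by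
      calc ∑ p, σ p * B p ^ 2 ≤ ∑ p, σ p * b ^ 2 := by
            apply Finset.sum_le_sum; intro p _
            exact mul_le_mul_of_nonneg_left (by
              have := hB p; nlinarith [abs_nonneg (B p), sq_abs (B p)]) (hσ0 p)
        _ = b ^ 2 := by rw [← Finset.sum_mul, hσ1, one_mul]
    nlinarith [sq_nonneg (∑ q, σ q * B q)]
  have hq := cov_sq_le σ A B hσ0
  have hAnn : 0 ≤ ∑ p, σ p * (A p - ∑ q, σ q * A q) ^ 2 :=
    Finset.sum_nonneg fun p _ => mul_nonneg (hσ0 p) (sq_nonneg _)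
  have hBnn : 0 ≤ ∑ p, σ p * (B p - ∑ q, σ q * B q) ^ 2 :=
    Finset.sum_nonneg fun p _ => mul_nonneg (hσ0 p) (sq_nonneg _)
  have : (∑ p, σ p * ((A p - ∑ q, σ q * A q) * (B p - ∑ q, σ q * B q))) ^ 2 ≤ (a * b) ^ 2 := by
    calc _ ≤ _ := hq
      _ ≤ a ^ 2 * b ^ 2 := by nlinarith
      _ = (a * b) ^ 2 := by ring
  nlinarith [abs_nonneg (∑ p, σ p * ((A p - ∑ q, σ q * A q) * (B p - ∑ q, σ q * B q))),
    sq_abs (∑ p, σ p * ((A p - ∑ q, σ q * A q) * (B p - ∑ q, σ q * B q))), mul_nonneg ha hb]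

/-- nonnegativity of variance-type expression. -/
lemma var_nonneg {ι : Type*} [Fintype ι] (σ A : ι → ℝ) (hσ0 : ∀ p, 0 ≤ σ p)
    (hσ1 : ∑ p, σ p = 1) :
    0 ≤ ∑ p, σ p * (A p - ∑ q, σ q * A q) * A p := by
  rw [cent_mul σ A A hσ1]
  exact Finset.sum_nonneg fun p _ => mul_nonneg (hσ0 p) (mul_self_nonneg _)


open Finset Real
open RealInnerProductSpace

section Softmax

variable {F : Type*} [NormedAddCommGroup F] [InnerProductSpace ℝ F]
variable {ι : Type*} [Fintype ι] [Nonempty ι]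

/-- softmax weights for linear scores `⟪u p, t⟫`. -/
noncomputable def sm (u : ι → F) (p : ι) (t : F) : ℝ :=
  Real.exp ⟪u p, t⟫ / ∑ q, Real.exp ⟪u q, t⟫

lemma S_pos (u : ι → F) (t : F) : 0 < ∑ q, Real.exp ⟪u q, t⟫ :=
  Finset.sum_pos (fun q _ => Real.exp_pos _) Finset.univ_nonempty

lemma sm_pos (u : ι → F) (p : ι) (t : F) : 0 < sm u p t :=
  div_pos (Real.exp_pos _) (S_pos u t)

lemma sm_sum (u : ι → F) (t : F) : ∑ p, sm u p t = 1 := by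
  simp only [sm]; rw [← Finset.sum_div]; exact div_self (S_pos u t).ne'

lemma hasFDerivAt_exp_inner (u : ι → F) (p : ι) (t : F) :
    HasFDerivAt (fun t => Real.exp ⟪u p, t⟫)
      (Real.exp ⟪u p, t⟫ • innerSL ℝ (u p)) t := by
  have h1 : HasFDerivAt (fun t : F => ⟪u p, t⟫) (innerSL ℝ (u p)) t :=
    (innerSL ℝ (u p)).hasFDerivAt
  exact (Real.hasDerivAt_exp ⟪u p, t⟫).comp_hasFDerivAt t h1

lemma hasFDerivAt_S (u : ι → F) (t : F) :
    HasFDerivAt (fun t => ∑ q, Real.exp ⟪u q, t⟫)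
      (∑ q, Real.exp ⟪u q, t⟫ • innerSL ℝ (u q)) t :=
  HasFDerivAt.fun_sum fun q _ => hasFDerivAt_exp_inner u q t

lemma hasFDerivAt_lse (u : ι → F) (t : F) :
    HasFDerivAt (fun t => Real.log (∑ q, Real.exp ⟪u q, t⟫))
      (∑ p, sm u p t • innerSL ℝ (u p)) t := by
  have := (hasFDerivAt_S u t).log (S_pos u t).ne'
  convert this using 1
  rw [Finset.smul_sum]
  refine Finset.sum_congr rfl fun p _ => ?_
  rw [smul_smul, sm, div_eq_inv_mul]

lemma hasFDerivAt_sm (u : ι → F) (p : ι) (t : F) :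
    HasFDerivAt (sm u p)
      (sm u p t • (innerSL ℝ (u p) - ∑ q, sm u q t • innerSL ℝ (u q))) t := by
  set S := ∑ q, Real.exp ⟪u q, t⟫ with hSdef
  have hS0 : S ≠ 0 := (S_pos u t).ne'
  have hinv : HasFDerivAt (fun t : F => (∑ q, Real.exp ⟪u q, t⟫)⁻¹)
      ((-(S ^ 2)⁻¹) • (∑ q, Real.exp ⟪u q, t⟫ • innerSL ℝ (u q))) t :=
    (hasDerivAt_inv hS0).comp_hasFDerivAt t (hasFDerivAt_S u t)
  have hmul := (hasFDerivAt_exp_inner u p t).mul hinv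
  have hfun : sm u p = fun t : F => Real.exp ⟪u p, t⟫ * (∑ q, Real.exp ⟪u q, t⟫)⁻¹ := by
    funext s; simp [sm, div_eq_mul_inv]
  rw [hfun]
  refine hmul.congr_fderiv (Eq.symm ?_)
  ext h
  simp only [ContinuousLinearMap.coe_smul', Pi.smul_apply, ContinuousLinearMap.coe_sub',
    Pi.sub_apply, ContinuousLinearMap.coe_sum', Finset.sum_apply, smul_eq_mul,
    ContinuousLinearMap.add_apply, innerSL_apply_apply]
  have hsum : ∑ x, sm u x t * ⟪u x, h⟫
      = S⁻¹ * ∑ x, Real.exp ⟪u x, t⟫ * ⟪u x, h⟫ := by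
    rw [Finset.mul_sum]
    refine Finset.sum_congr rfl fun x _ => ?_
    simp only [sm, ← hSdef, div_eq_mul_inv]
    ring
  rw [hsum]
  simp only [sm, ← hSdef, div_eq_mul_inv]
  field_simp
  ring

end Softmax

section Softmax2
variable {F : Type*} [NormedAddCommGroup F] [InnerProductSpace ℝ F]
variable {ι : Type*} [Fintype ι] [Nonempty ι]

/-- derivative of the softmax-average field -/
noncomputable def Dmap (u : ι → F) (t : F) : F →L[ℝ] F :=
  ∑ p, (sm u p t • (innerSL ℝ (u p) - ∑ q, sm u q t • innerSL ℝ (u q))).smulRight (u p)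

lemma hasFDerivAt_smG (u : ι → F) (t : F) :
    HasFDerivAt (fun t => ∑ p, sm u p t • u p) (Dmap u t) t :=
  HasFDerivAt.fun_sum fun p _ => (hasFDerivAt_sm u p t).smul_const (u p)

lemma Dmap_apply (u : ι → F) (t h : F) :
    Dmap u t h = ∑ p, (sm u p t * (⟪u p, h⟫ - ∑ q, sm u q t * ⟪u q, h⟫)) • u p := by
  simp only [Dmap, ContinuousLinearMap.coe_sum', Finset.sum_apply,
    ContinuousLinearMap.smulRight_apply, ContinuousLinearMap.coe_smul', Pi.smul_apply,
    ContinuousLinearMap.coe_sub', Pi.sub_apply, ContinuousLinearMap.coe_sum',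
    Finset.sum_apply, smul_eq_mul, innerSL_apply_apply]

lemma inner_Dmap (u : ι → F) (t h x : F) :
    ⟪Dmap u t h, x⟫ = ∑ p, sm u p t * (⟪u p, h⟫ - ∑ q, sm u q t * ⟪u q, h⟫) * ⟪u p, x⟫ := by
  rw [Dmap_apply, sum_inner]
  exact Finset.sum_congr rfl fun p _ => real_inner_smul_left _ _ _

lemma Dmap_cov_bound (u : ι → F) (t h x : F) {r : ℝ} (hr : 0 ≤ r) (hu : ∀ p, ‖u p‖ ≤ r) :
    |⟪Dmap u t h, x⟫| ≤ (r * ‖h‖) * (r * ‖x‖) := by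
  rw [inner_Dmap]
  exact cov_bound (fun p => sm u p t) (fun p => ⟪u p, h⟫) (fun p => ⟪u p, x⟫)
    (fun p => (sm_pos u p t).le) (sm_sum u t)
    (mul_nonneg hr (norm_nonneg _)) (mul_nonneg hr (norm_nonneg _))
    (fun p => (abs_real_inner_le_norm _ _).trans
      (mul_le_mul_of_nonneg_right (hu p) (norm_nonneg _)))
    (fun p => (abs_real_inner_le_norm _ _).trans
      (mul_le_mul_of_nonneg_right (hu p) (norm_nonneg _)))

lemma Dmap_norm_le (u : ι → F) (t : F) {r : ℝ} (hr : 0 ≤ r) (hu : ∀ p, ‖u p‖ ≤ r) :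
    ‖Dmap u t‖ ≤ r ^ 2 := by
  refine ContinuousLinearMap.opNorm_le_bound _ (sq_nonneg r) fun h => ?_
  set v := Dmap u t h with hv
  have h1 : ‖v‖ ^ 2 = ⟪v, v⟫ := (real_inner_self_eq_norm_sq v).symm
  have h2 : ⟪v, v⟫ ≤ (r * ‖h‖) * (r * ‖v‖) :=
    (le_abs_self _).trans (Dmap_cov_bound u t h v hr hu)
  rcases eq_or_lt_of_le (norm_nonneg v) with h0 | h0
  · rw [← h0]; positivity
  · nlinarith [norm_nonneg h]

lemma Dmap_inner_self_nonneg (u : ι → F) (t h : F) : 0 ≤ ⟪Dmap u t h, h⟫ := by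
  rw [inner_Dmap]
  exact var_nonneg (fun p => sm u p t) (fun p => ⟪u p, h⟫) (fun p => (sm_pos u p t).le)
    (sm_sum u t)

end Softmax2

/-- Lipschitz constant of the gradient of the smoothed path potential: for `γ > 0`,
when each `θ_p ∈ {0,1}^E` has at most `l_w ≥ 1` nonzero entries for `p ∈ P_w`, the
convex function `ψ_γ(t) = ∑_{w ∈ W} d_w · γ · ln(∑_{p ∈ P_w} exp(−⟨θ_p, t⟩/γ))` has
a Lipschitz-continuous gradient with respect to the Euclidean norm with constant
`L = (1/γ) ∑_{w ∈ W} d_w · l_w²`. -/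
theorem stmt15 {E W : Type*} [Fintype E] [Fintype W] (P : W → Type*)
    [∀ w, Fintype (P w)] [∀ w, Nonempty (P w)]
    (γ : ℝ) (hγ : 0 < γ) (d : W → ℝ) (hd : ∀ w, 0 < d w)
    (θ : ∀ w, P w → EuclideanSpace ℝ E)
    (hθ01 : ∀ w (p : P w) (e : E), θ w p e = 0 ∨ θ w p e = 1)
    (l : W → ℕ) (hl : ∀ w, 1 ≤ l w)
    (hcard : ∀ w (p : P w),
      (Finset.univ.filter fun e : E => θ w p e ≠ 0).card ≤ l w)
    (ψγ : EuclideanSpace ℝ E → ℝ)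
    (hψγ : ∀ t, ψγ t = ∑ w, d w * γ * Real.log (∑ p, Real.exp (-⟪θ w p, t⟫ / γ))) :
    ConvexOn ℝ Set.univ ψγ ∧
    ∀ t t' : EuclideanSpace ℝ E,
      ‖gradient ψγ t - gradient ψγ t'‖ ≤
        ((1 / γ) * ∑ w, d w * (l w : ℝ) ^ 2) * ‖t - t'‖ := by
  classical
  set u : ∀ w, P w → EuclideanSpace ℝ E := fun w p => (-γ⁻¹) • θ w p with hu
  -- rewrite scores
  have hinner : ∀ w (p : P w) (t : EuclideanSpace ℝ E), ⟪u w p, t⟫ = -⟪θ w p, t⟫ / γ := by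
    intro w p t
    rw [hu]
    simp only [real_inner_smul_left]
    field_simp
  have hfun : ψγ = fun t => ∑ w, (d w * γ) * Real.log (∑ p, Real.exp ⟪u w p, t⟫) := by
    funext t
    rw [hψγ t]
    exact Finset.sum_congr rfl fun w _ => by
      simp only [hinner]
  -- norm bound on u
  have hθnorm : ∀ w (p : P w), ‖θ w p‖ ≤ (l w : ℝ) := by
    intro w p
    have hsq : ‖θ w p‖ ^ 2 = ∑ e, (θ w p e) ^ 2 := by
      rw [EuclideanSpace.norm_eq, Real.sq_sqrt (Finset.sum_nonneg fun e _ => sq_nonneg _)]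
      exact Finset.sum_congr rfl fun e _ => by rw [Real.norm_eq_abs, sq_abs]
    have h2 : ∑ e, (θ w p e) ^ 2 = ((Finset.univ.filter fun e : E => θ w p e ≠ 0).card : ℝ) := by
      rw [← Finset.sum_boole]
      exact Finset.sum_congr rfl fun e _ => by
        rcases hθ01 w p e with h | h <;> simp [h]
    have h3 : ‖θ w p‖ ^ 2 ≤ (l w : ℝ) := by
      rw [hsq, h2]; exact_mod_cast hcard w p
    have h4 : (1 : ℝ) ≤ (l w : ℝ) := by exact_mod_cast hl w
    nlinarith [norm_nonneg (θ w p)]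
  have hunorm : ∀ w (p : P w), ‖u w p‖ ≤ (l w : ℝ) / γ := by
    intro w p
    rw [hu]
    simp only [norm_smul, Real.norm_eq_abs, abs_neg, abs_inv, abs_of_pos hγ]
    rw [div_eq_inv_mul]
    exact mul_le_mul_of_nonneg_left (hθnorm w p) (by positivity)
  -- gradient field and its derivative
  set G : EuclideanSpace ℝ E → EuclideanSpace ℝ E := fun t => ∑ w, (d w * γ) • (∑ p, sm (u w) p t • u w p) with hG
  set D : EuclideanSpace ℝ E → EuclideanSpace ℝ E →L[ℝ]  EuclideanSpace ℝ E := fun t => ∑ w, (d w * γ) • Dmap (u w) t with hD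
  set Dψ : EuclideanSpace ℝ E → EuclideanSpace ℝ E →L[ℝ] ℝ :=
    fun t => ∑ w, (d w * γ) • (∑ p, sm (u w) p t • innerSL ℝ (u w p)) with hDψ
  have hψ' : ∀ t, HasFDerivAt ψγ (Dψ t) t := by
    intro t
    rw [hfun]
    exact HasFDerivAt.fun_sum fun w _ => (hasFDerivAt_lse (u w) t).const_mul (d w * γ)
  have hG' : ∀ t, HasFDerivAt G (D t) t := fun t =>
    HasFDerivAt.fun_sum fun w _ => (hasFDerivAt_smG (u w) t).const_smul (d w * γ)
  -- duality
  have hdual : ∀ t, InnerProductSpace.toDual ℝ (EuclideanSpace ℝ E) (G t) = Dψ t := by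
    intro t
    ext h
    rw [InnerProductSpace.toDual_apply_apply]
    rw [hG, hDψ]
    simp only [sum_inner, real_inner_smul_left, ContinuousLinearMap.coe_sum',
      Finset.sum_apply, ContinuousLinearMap.coe_smul', Pi.smul_apply, smul_eq_mul,
      innerSL_apply_apply]
  have hgrad : ∀ t, gradient ψγ t = G t := by
    intro t
    refine HasGradientAt.gradient ?_
    rw [hasGradientAt_iff_hasFDerivAt, hdual t]
    exact hψ' t
  have hψapp : ∀ t v, Dψ t v = ⟪G t, v⟫ := by
    intro t v
    rw [← hdual t, InnerProductSpace.toDual_apply_apply]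
  -- Lipschitz bound for D
  set L : ℝ := (1 / γ) * ∑ w, d w * (l w : ℝ) ^ 2 with hL
  have hDnorm : ∀ t, ‖D t‖ ≤ L := by
    intro t
    calc ‖D t‖ ≤ ∑ w, ‖(d w * γ) • Dmap (u w) t‖ := norm_sum_le _ _
      _ ≤ ∑ w, (d w * γ) * (((l w : ℝ) / γ) ^ 2) := by
          refine Finset.sum_le_sum fun w _ => ?_
          calc ‖(d w * γ) • Dmap (u w) t‖ = ‖d w * γ‖ * ‖Dmap (u w) t‖ :=
                norm_smul (d w * γ) (Dmap (u w) t)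
            _ ≤ (d w * γ) * ((l w : ℝ) / γ) ^ 2 := by
                rw [Real.norm_eq_abs, abs_of_pos (mul_pos (hd w) hγ)]
                exact mul_le_mul_of_nonneg_left
                  (Dmap_norm_le (u w) t (div_nonneg (Nat.cast_nonneg _) hγ.le) (hunorm w))
                  (mul_pos (hd w) hγ).le
      _ = L := by
          rw [hL, Finset.mul_sum]
          refine Finset.sum_congr rfl fun w _ => ?_
          field_simp
  -- convexity
  have hconv : ConvexOn ℝ Set.univ ψγ := by
    constructor
    · exact convex_univ
    intro x _ y _ a b ha hb hab
    set v := y - x with hv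
    set c : ℝ →  EuclideanSpace ℝ E := fun s => x + s • v with hc
    have hcd : ∀ s : ℝ, HasDerivAt c v s := by
      intro s
      have := ((hasDerivAt_id s).smul_const v).const_add x
      simpa [hc] using this
    set g : ℝ → ℝ := fun s => ψγ (c s) with hg
    have hg1 : ∀ s, HasDerivAt g (⟪G (c s), v⟫) s := by
      intro s
      have := (hψ' (c s)).comp_hasDerivAt s (hcd s)
      rwa [hψapp] at this
    have hgderiv : deriv g = fun s => ⟪G (c s), v⟫ := funext fun s => (hg1 s).deriv
    have hg2 : ∀ s, HasDerivAt (deriv g) (⟪v, D (c s) v⟫) s := by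
      intro s
      rw [hgderiv]
      have hφ : HasFDerivAt (fun t => ⟪G t, v⟫) ((innerSL ℝ v).comp (D (c s))) (c s) := by
        have h1 : (fun t : EuclideanSpace ℝ E => ⟪G t, v⟫) = fun t => (innerSL ℝ v) (G t) := by
          funext t; rw [innerSL_apply_apply, real_inner_comm]
        rw [h1]
        exact (innerSL ℝ v).hasFDerivAt.comp (c s) (hG' (c s))
      have := hφ.comp_hasDerivAt s (hcd s)
      simpa [Function.comp_def] using this
    have hgconv : ConvexOn ℝ Set.univ g := by
      refine convexOn_univ_of_deriv2_nonneg
        (fun s => (hg1 s).differentiableAt)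
        (fun s => (hg2 s).differentiableAt) ?_
      intro s
      have h2 : deriv (deriv g) s = ⟪v, D (c s) v⟫ := (hg2 s).deriv
      have h3 : deriv^[2] g s = deriv (deriv g) s := by
        rw [Function.iterate_succ_apply', Function.iterate_one]
      rw [h3, h2]
      simp only [hD, ContinuousLinearMap.sum_apply, ContinuousLinearMap.coe_smul',
        Pi.smul_apply, inner_sum, real_inner_smul_right, smul_eq_mul]
      refine Finset.sum_nonneg fun w _ => mul_nonneg (mul_pos (hd w) hγ).le ?_
      rw [real_inner_comm]
      exact Dmap_inner_self_nonneg _ _ _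
    -- use convexity of g on [0,1]-combination of 0 and 1
    have key := hgconv.2 (Set.mem_univ (0 : ℝ)) (Set.mem_univ (1 : ℝ)) ha hb hab
    have h0 : g (a • (0:ℝ) + b • 1) = ψγ (a • x + b • y) := by
      have hb' : a • (0:ℝ) + b • 1 = b := by simp
      rw [hb']
      show ψγ (x + b • v) = ψγ (a • x + b • y)
      congr 1
      rw [hv, smul_sub, show a = 1 - b by linarith, sub_smul, one_smul]
      abel
    have hg0 : g 0 = ψγ x := by simp [hg, hc]
    have hg1' : g 1 = ψγ y := by simp [hg, hc, hv]
    rw [h0, hg0, hg1'] at key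
    exact key
  refine ⟨hconv, fun t t' => ?_⟩
  rw [hgrad t, hgrad t']
  have := Convex.norm_image_sub_le_of_norm_hasFDerivWithin_le
    (f := G) (f' := D) (C := L) (s := Set.univ)
    (fun x _ => (hG' x).hasFDerivWithinAt)
    (fun x _ => hDnorm x) convex_univ (Set.mem_univ t') (Set.mem_univ t)
  simpa using this
end

section
/- The minimum over x ∈ X of ∑_{e ∈ E} σ_e((Θx)_e) + γ ∑_{w ∈ W} ∑_{p ∈ P_w} x_p ln(x_p/d_w) (with the convention 0·ln 0 = 0) equals the negative of the infimum over t ∈ ℝ^E of γ ∑_{w ∈ W} d_w ln( ∑_{p ∈ P_w} exp(−⟨θ_p, t⟩/γ) ) + ∑_{e ∈ E} σ_e*(t_e), where σ_e*(s) = sup_{f ∈ ℝ} ( f·s − σ_e(f) ) and the infimum is taken over those t with σ_e*(t_e) < ∞ for all e ∈ E. -/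
open Real Finset


section Aux

/-- Gibbs inequality: entropy-regularized linear functional over scaled simplex is
bounded below by the softmin value. -/
lemma gibbs_ineq {P : Type*} [Fintype P] [Nonempty P] {γ d : ℝ} (hγ : 0 < γ) (hd : 0 < d)
    (c : P → ℝ) (x : P → ℝ) (hx : ∀ p, 0 ≤ x p) (hsum : ∑ p, x p = d) :
    -(γ * (d * Real.log (∑ p, Real.exp (-c p / γ)))) ≤
      γ * ∑ p, x p * Real.log (x p / d) + ∑ p, c p * x p := by
  set Z : ℝ := ∑ p, Real.exp (-c p / γ) with hZ
  have hZpos : 0 < Z := Finset.sum_pos (fun p _ => Real.exp_pos _) Finset.univ_nonempty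
  set q : P → ℝ := fun p => d * Real.exp (-c p / γ) / Z with hq
  have hqpos : ∀ p, 0 < q p := fun p => by positivity
  have hqsum : ∑ p, q p = d := by
    have h : ∑ p, q p = d * Z / Z := by
      rw [hZ, Finset.mul_sum, Finset.sum_div]
    rw [h, mul_div_assoc, div_self hZpos.ne', mul_one]
  -- relative entropy nonneg
  have hrel : 0 ≤ ∑ p, x p * Real.log (x p / q p) := by
    have h1 : ∀ p ∈ Finset.univ, x p - q p ≤ x p * Real.log (x p / q p) := by
      intro p _
      rcases eq_or_lt_of_le (hx p) with h0 | h0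
      · simp [← h0, (hqpos p).le]
      · have hlog : Real.log (q p / x p) ≤ q p / x p - 1 :=
          Real.log_le_sub_one_of_pos (by positivity)
        have : Real.log (q p / x p) = -Real.log (x p / q p) := by
          rw [← Real.log_inv, inv_div]
        rw [this] at hlog
        have := mul_le_mul_of_nonneg_left hlog (hx p)
        rw [mul_sub, mul_div_cancel₀ _ h0.ne', mul_one, mul_neg] at this
        linarith
    have := Finset.sum_le_sum h1
    rw [Finset.sum_sub_distrib, hsum, hqsum, sub_self] at this
    linarith
  -- decompose log (x/d)
  have hdec : ∀ p, x p * Real.log (x p / d) =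
      x p * Real.log (x p / q p) + x p * (-c p / γ - Real.log Z) := by
    intro p
    rcases eq_or_lt_of_le (hx p) with h0 | h0
    · simp [← h0]
    · have hlq : Real.log (q p) = Real.log d + (-c p / γ) - Real.log Z := by
        rw [hq]
        rw [Real.log_div (by positivity) hZpos.ne', Real.log_mul hd.ne' (Real.exp_pos _).ne',
          Real.log_exp]
      rw [Real.log_div h0.ne' hd.ne', Real.log_div h0.ne' (hqpos p).ne', hlq]
      ring
  have hrw : γ * ∑ p, x p * Real.log (x p / d) + ∑ p, c p * x p =
      γ * ∑ p, x p * Real.log (x p / q p) - γ * (d * Real.log Z) := by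
    have : ∑ p, x p * Real.log (x p / d) =
        ∑ p, x p * Real.log (x p / q p) + ∑ p, x p * (-c p / γ - Real.log Z) := by
      rw [← Finset.sum_add_distrib]; exact Finset.sum_congr rfl fun p _ => hdec p
    rw [this]
    have h2 : ∑ p, x p * (-c p / γ - Real.log Z)
        = (∑ p, x p * (-c p / γ)) - (∑ p, x p) * Real.log Z := by
      rw [Finset.sum_mul, ← Finset.sum_sub_distrib]
      exact Finset.sum_congr rfl fun p _ => by ring
    rw [h2, hsum]
    have h3 : γ * ∑ p, x p * (-c p / γ) = -∑ p, c p * x p := by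
      rw [Finset.mul_sum, ← Finset.sum_neg_distrib]
      exact Finset.sum_congr rfl fun p _ => by field_simp
    rw [mul_add, mul_sub, h3]; ring
  rw [hrw]
  nlinarith [mul_le_mul_of_nonneg_left hrel hγ.le]

/-- Gibbs equality at the Gibbs point. -/
lemma gibbs_eq {P : Type*} [Fintype P] [Nonempty P] {γ d : ℝ} (hγ : 0 < γ) (hd : 0 < d)
    (c : P → ℝ) :
    γ * ∑ p, (d * Real.exp (-c p / γ) / (∑ p', Real.exp (-c p' / γ))) *
        Real.log ((d * Real.exp (-c p / γ) / (∑ p', Real.exp (-c p' / γ))) / d)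
      + ∑ p, c p * (d * Real.exp (-c p / γ) / (∑ p', Real.exp (-c p' / γ)))
      = -(γ * (d * Real.log (∑ p, Real.exp (-c p / γ)))) := by
  set Z : ℝ := ∑ p, Real.exp (-c p / γ) with hZ
  have hZpos : 0 < Z := Finset.sum_pos (fun p _ => Real.exp_pos _) Finset.univ_nonempty
  have hlog : ∀ p, Real.log ((d * Real.exp (-c p / γ) / Z) / d) = -c p / γ - Real.log Z := by
    intro p
    have h : (d * Real.exp (-c p / γ) / Z) / d = Real.exp (-c p / γ) / Z := by
      field_simp
    rw [h, Real.log_div (Real.exp_pos _).ne' hZpos.ne', Real.log_exp]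
  have hqsum : ∑ p, d * Real.exp (-c p / γ) / Z = d := by
    have h : ∑ p, d * Real.exp (-c p / γ) / Z = d * Z / Z := by
      rw [hZ, Finset.mul_sum, Finset.sum_div]
    rw [h, mul_div_assoc, div_self hZpos.ne', mul_one]
  have : ∀ p, γ * ((d * Real.exp (-c p / γ) / Z) * Real.log ((d * Real.exp (-c p / γ) / Z) / d))
      + c p * (d * Real.exp (-c p / γ) / Z)
      = -(γ * Real.log Z) * (d * Real.exp (-c p / γ) / Z) := by
    intro p
    rw [hlog p]
    field_simp
    ring
  calc γ * ∑ p, (d * Real.exp (-c p / γ) / Z) * Real.log ((d * Real.exp (-c p / γ) / Z) / d)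
      + ∑ p, c p * (d * Real.exp (-c p / γ) / Z)
      = ∑ p, (γ * ((d * Real.exp (-c p / γ) / Z) * Real.log ((d * Real.exp (-c p / γ) / Z) / d))
          + c p * (d * Real.exp (-c p / γ) / Z)) := by
        rw [Finset.sum_add_distrib, Finset.mul_sum]
    _ = ∑ p, -(γ * Real.log Z) * (d * Real.exp (-c p / γ) / Z) := Finset.sum_congr rfl fun p _ => this p
    _ = -(γ * Real.log Z) * d := by rw [← Finset.mul_sum, hqsum]
    _ = -(γ * (d * Real.log Z)) := by ring


lemma sum_csSup_le {E : Type*} [Fintype E] (g : E → ℝ → ℝ)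
    (hbdd : ∀ e, BddAbove (Set.range (g e))) {C : ℝ}
    (h : ∀ f : E → ℝ, ∑ e, g e (f e) ≤ C) :
    ∑ e, sSup (Set.range (g e)) ≤ C := by
  classical
  by_contra hlt
  push_neg at hlt
  set ε : ℝ := (∑ e, sSup (Set.range (g e)) - C) / (Fintype.card E + 1) with hε
  have hcard : (0:ℝ) < Fintype.card E + 1 := by positivity
  have hεpos : 0 < ε := by
    apply div_pos _ hcard
    linarith
  have hex : ∀ e : E, ∃ f : ℝ, sSup (Set.range (g e)) - ε < g e f := by
    intro e
    obtain ⟨a, ⟨f, rfl⟩, hfa⟩ := exists_lt_of_lt_csSup (Set.range_nonempty _)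
      (show sSup (Set.range (g e)) - ε < sSup (Set.range (g e)) by linarith)
    exact ⟨f, hfa⟩
  choose f hf using hex
  have h1 : ∑ e, (sSup (Set.range (g e)) - ε) < ∑ e, g e (f e) := by
    rcases isEmpty_or_nonempty E with hE | hE
    · exfalso
      have : (∑ e : E, sSup (Set.range (g e))) = 0 := by simp
      have h0 := h (fun _ => 0)
      simp at h0
      rw [this] at hlt
      linarith
    · exact Finset.sum_lt_sum_of_nonempty Finset.univ_nonempty (fun e _ => hf e)
  rw [Finset.sum_sub_distrib, Finset.sum_const, Finset.card_univ, nsmul_eq_mul] at h1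
  have h2 := h f
  have h3 : (Fintype.card E : ℝ) * ε ≤ (Fintype.card E + 1) * ε := by
    nlinarith
  have h4 : ((Fintype.card E : ℝ) + 1) * ε = ∑ e, sSup (Set.range (g e)) - C := by
    rw [hε, mul_div_cancel₀ _ hcard.ne']
  linarith

lemma exists_subgradient {E : Type*} [Fintype E] (φ : (E → ℝ) → ℝ)
    (hconv : ConvexOn ℝ Set.univ φ) :
    ∃ t : E → ℝ, ∀ u, φ 0 + ∑ e, t e * u e ≤ φ u := by
  classical
  have hcont : Continuous φ := by
    exact continuousOn_univ.mp (hconv.continuousOn isOpen_univ)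
  set S : Set ((E → ℝ) × ℝ) := {p | φ p.1 < p.2} with hS
  have hSconv : Convex ℝ S := by
    rintro ⟨u, r⟩ hu ⟨v, s⟩ hv a b ha hb hab
    simp only [hS, Set.mem_setOf_eq] at hu hv ⊢
    have h1 : φ (a • u + b • v) ≤ a * φ u + b * φ v := by
      have := hconv.2 (Set.mem_univ u) (Set.mem_univ v) ha hb hab
      simpa [smul_eq_mul] using this
    have h2 : a * φ u + b * φ v < a * r + b * s := by
      rcases lt_or_eq_of_le ha with ha' | ha'
      · have hb2 : b * φ v ≤ b * s := mul_le_mul_of_nonneg_left hv.le hb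
        nlinarith
      · have ha0 : a = 0 := ha'.symm
        have hb1 : b = 1 := by linarith
        simp [ha0, hb1, hv]
    calc φ ((a • (u, r) + b • (v, s)).1) = φ (a • u + b • v) := rfl
    _ < a * r + b * s := lt_of_le_of_lt h1 h2
    _ = (a • (u, r) + b • (v, s)).2 := by simp [smul_eq_mul]
  have hSopen : IsOpen S := by
    have : S = {p : (E → ℝ) × ℝ | φ p.1 - p.2 < 0} := by
      ext p; simp [hS, sub_neg]
    rw [this]
    exact isOpen_lt ((hcont.comp continuous_fst).sub continuous_snd) continuous_const
  have hnot : ((0 : E → ℝ), φ 0) ∉ S := by simp [hS]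
  obtain ⟨L, hL⟩ := geometric_hahn_banach_open_point hSconv hSopen hnot
  -- c := L (0, 1) < 0
  set c : ℝ := L ((0 : E → ℝ), (1 : ℝ)) with hc
  have hL_add : ∀ (u : E → ℝ) (r s : ℝ), L (u, r + s) = L (u, r) + L (0, s) := by
    intro u r s
    have : ((u, r + s) : (E → ℝ) × ℝ) = (u, r) + (0, s) := by simp
    rw [this, map_add]
  have hcneg : c < 0 := by
    have h1 := hL (((0 : E → ℝ)), φ 0 + 1) (by simp [hS])
    rw [hL_add 0 (φ 0) 1] at h1
    linarith
  -- key: ∀ u, L (u, φ u) ≤ L (0, φ 0)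
  have hkey : ∀ u : E → ℝ, L (u, φ u) ≤ L (0, φ 0) := by
    intro u
    by_contra hgt
    push_neg at hgt
    have hε : 0 < (L (u, φ u) - L (0, φ 0)) / (-c) := by
      apply div_pos (by linarith) (by linarith)
    set ε := (L (u, φ u) - L (0, φ 0)) / (-c) with hεdef
    have h1 := hL (u, φ u + ε) (by simp [hS, hε])
    rw [hL_add u (φ u) ε] at h1
    have hsm : L ((0 : E → ℝ), ε) = ε * c := by
      have : ((0 : E → ℝ), ε) = ε • (((0 : E → ℝ), (1:ℝ))) := by simp [Prod.smul_def]
      rw [this, map_smul, smul_eq_mul, hc]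
    rw [hsm] at h1
    have hcne : c ≠ 0 := ne_of_lt hcneg
    have : ε * c = -(L (u, φ u) - L (0, φ 0)) := by
      rw [hεdef, div_mul_eq_mul_div, div_eq_iff (neg_ne_zero.mpr hcne)]; ring
    rw [this] at h1
    linarith
  -- decompose L (u, r) = L(u,0) + r * c, and L(u,0) linear in u
  have hdec : ∀ (u : E → ℝ) (r : ℝ), L (u, r) = L (u, 0) + r * c := by
    intro u r
    have h1 : L (u, r) = L (u, 0) + L (0, r) := by
      have : ((u, r) : (E → ℝ) × ℝ) = (u, 0) + (0, r) := by simp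
      rw [this, map_add]
    have h2 : L ((0 : E → ℝ), r) = r * c := by
      have : ((0 : E → ℝ), r) = r • (((0 : E → ℝ), (1:ℝ))) := by simp [Prod.smul_def]
      rw [this, map_smul, smul_eq_mul, hc]
    rw [h1, h2]
  have hlin : ∀ u : E → ℝ, L (u, 0) = ∑ e, u e * L ((fun j => if e = j then 1 else 0 : E → ℝ), 0) := by
    intro u
    have hu : (u, (0:ℝ)) = ∑ e, u e • (((fun j => if e = j then 1 else 0 : E → ℝ)), (0:ℝ)) := by
      rw [Prod.ext_iff]
      constructor
      · simp only [Prod.fst_sum, Prod.smul_mk]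
        exact pi_eq_sum_univ u
      · rw [Prod.snd_sum]; simp
    rw [hu, map_sum]
    exact Finset.sum_congr rfl fun e _ => by rw [map_smul, smul_eq_mul]
  refine ⟨fun e => L ((fun j => if e = j then 1 else 0 : E → ℝ), 0) / (-c), fun u => ?_⟩
  have h1 := hkey u
  rw [hdec u (φ u), hdec 0 (φ 0)] at h1
  have hL0 : L ((0 : E → ℝ), (0:ℝ)) = 0 := by
    have : ((0 : E → ℝ), (0:ℝ)) = (0 : (E → ℝ) × ℝ) := rfl
    rw [this, map_zero]
  rw [hL0] at h1
  -- h1 : L (u, 0) + φ u * c ≤ 0 + φ 0 * c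
  rw [hlin u] at h1
  have hsum : ∑ e, (L ((fun j => if e = j then 1 else 0 : E → ℝ), 0) / (-c)) * u e
      = (∑ e, u e * L ((fun j => if e = j then 1 else 0 : E → ℝ), 0)) / (-c) := by
    rw [Finset.sum_div]
    exact Finset.sum_congr rfl fun e _ => by ring
  rw [hsum]
  set A := ∑ e, u e * L ((fun j => if e = j then 1 else 0 : E → ℝ), 0) with hA
  have hcne : c ≠ 0 := ne_of_lt hcneg
  have h2 : A / -c * -c = A := div_mul_cancel₀ A (neg_ne_zero.mpr hcne)
  nlinarith [h1, h2, hcneg]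


lemma mul_log_div_eq (dw : ℝ) (hdw : 0 < dw) (y : ℝ) :
    y * Real.log (y / dw) = y * Real.log y - Real.log dw * y := by
  rcases eq_or_ne y 0 with rfl | hy
  · simp
  · rw [Real.log_div hy hdw.ne']; ring

lemma convexOn_mul_log_div (dw : ℝ) (hdw : 0 < dw) :
    ConvexOn ℝ (Set.Ici 0) (fun y => y * Real.log (y / dw)) := by
  have h : (fun y => y * Real.log (y / dw))
      = fun y => y * Real.log y - Real.log dw * y := funext (mul_log_div_eq dw hdw)
  rw [h]
  apply Real.convexOn_mul_log.sub
  exact ⟨convex_Ici 0, by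
    intro x _ y _ a b _ _ _
    simp only [smul_eq_mul]
    ring_nf
    exact le_rfl⟩

lemma continuous_mul_log_div (dw : ℝ) (hdw : 0 < dw) :
    Continuous (fun y => y * Real.log (y / dw)) := by
  have h : (fun y => y * Real.log (y / dw))
      = fun y => ((y / dw) * Real.log (y / dw)) * dw := by
    funext y
    rw [div_mul_eq_mul_div, div_mul_eq_mul_div, mul_comm y, mul_div_assoc, div_self hdw.ne',
      mul_one, mul_comm]
  rw [h]
  exact ((Real.continuous_mul_log.comp (continuous_id.div_const dw)).mul continuous_const)


end Aux

/-- Variational principle (single-level case): the minimum over `x ∈ X` of the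
entropy-regularized primal
`∑_e σ_e((Θx)_e) + γ ∑_w ∑_{p ∈ P_w} x_p ln(x_p/d_w)`
(the convention `0·ln 0 = 0` holds automatically since `Real.log 0 = 0`) equals the
negative of the infimum over `t ∈ ℝ^E` with `σ_e*(t_e) < ∞` for all `e` (i.e. the
suprema defining the conjugates are bounded above) of the dual
`γ ∑_w d_w ln(∑_{p ∈ P_w} exp(−⟨θ_p, t⟩/γ)) + ∑_e σ_e*(t_e)`,
where `σ_e*(s) = sup_f (f·s − σ_e(f))`. -/
theorem stmt18 {E W : Type*} [Fintype E] [Fintype W] (P : W → Type*)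
    [∀ w, Fintype (P w)] [∀ w, Nonempty (P w)]
    (γ : ℝ) (hγ : 0 < γ) (d : W → ℝ) (hd : ∀ w, 0 < d w)
    (θ : ∀ w, P w → E → ℝ)
    (σ : E → ℝ → ℝ)
    (hσconv : ∀ e, ConvexOn ℝ Set.univ (σ e)) (hσcont : ∀ e, Continuous (σ e))
    (X : Set (∀ w, P w → ℝ))
    (hX : X = {x | (∀ w p, 0 ≤ x w p) ∧ ∀ w, ∑ p, x w p = d w})
    (Φ : (∀ w, P w → ℝ) → ℝ)
    (hΦ : ∀ x, Φ x = (∑ e, σ e (∑ w, ∑ p, θ w p e * x w p))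
      + γ * ∑ w, ∑ p, x w p * Real.log (x w p / d w))
    (σstar : E → ℝ → ℝ)
    (hσstar : ∀ e s, σstar e s = sSup (Set.range fun f : ℝ => f * s - σ e f))
    (D : (E → ℝ) → ℝ)
    (hD : ∀ t, D t = γ * (∑ w, d w * Real.log
        (∑ p, Real.exp (-(∑ e, θ w p e * t e) / γ)))
      + ∑ e, σstar e (t e)) :
    sInf (Φ '' X) =
      - sInf {v | ∃ t : E → ℝ,
          (∀ e, BddAbove (Set.range fun f : ℝ => f * t e - σ e f)) ∧ v = D t} := by
  classical
  set Θm : (∀ w, P w → ℝ) → E → ℝ := fun x e => ∑ w, ∑ p, θ w p e * x w p with hΘm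
  set Ent : (∀ w, P w → ℝ) → ℝ := fun x => ∑ w, ∑ p, x w p * Real.log (x w p / d w) with hEnt
  set F : (∀ w, P w → ℝ) → (E → ℝ) → ℝ :=
    fun x u => (∑ e, σ e (Θm x e + u e)) + γ * Ent x with hF
  set φ : (E → ℝ) → ℝ := fun u => sInf ((fun x => F x u) '' X) with hφdef
  -- membership in X
  have hXmem : ∀ x, x ∈ X ↔ (∀ w p, 0 ≤ x w p) ∧ ∀ w, ∑ p, x w p = d w := by
    intro x; rw [hX]; rfl
  -- X nonempty
  have hXne : X.Nonempty := by
    refine ⟨fun w p => d w / (Fintype.card (P w) : ℝ), (hXmem _).mpr ⟨?_, ?_⟩⟩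
    · intro w p
      exact div_nonneg (hd w).le (Nat.cast_nonneg _)
    · intro w
      rw [Finset.sum_const, Finset.card_univ, nsmul_eq_mul]
      field_simp
  -- X compact
  have hXclosed : IsClosed X := by
    rw [hX]
    have h1 : IsClosed {x : ∀ w, P w → ℝ | ∀ w p, 0 ≤ x w p} := by
      have he : {x : ∀ w, P w → ℝ | ∀ w p, 0 ≤ x w p}
          = ⋂ w, ⋂ p, {x : ∀ w, P w → ℝ | 0 ≤ x w p} := by
        ext x; simp
      rw [he]
      exact isClosed_iInter fun w => isClosed_iInter fun p =>
        isClosed_le continuous_const ((continuous_apply p).comp (continuous_apply w))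
    have h2 : IsClosed {x : ∀ w, P w → ℝ | ∀ w, ∑ p, x w p = d w} := by
      have he : {x : ∀ w, P w → ℝ | ∀ w, ∑ p, x w p = d w}
          = ⋂ w, {x : ∀ w, P w → ℝ | ∑ p, x w p = d w} := by
        ext x; simp
      rw [he]
      exact isClosed_iInter fun w => isClosed_eq
        (continuous_finset_sum _ fun p _ => (continuous_apply p).comp (continuous_apply w))
        continuous_const
    rw [Set.setOf_and]
    exact h1.inter h2
  have hXcomp : IsCompact X := by
    have hK : IsCompact (Set.pi Set.univ fun w => Set.pi Set.univ
        fun _p : P w => Set.Icc (0:ℝ) (d w)) :=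
      isCompact_univ_pi fun w => isCompact_univ_pi fun _p => isCompact_Icc
    apply hK.of_isClosed_subset hXclosed
    intro x hx
    rw [hXmem] at hx
    intro w _
    intro p _
    refine ⟨hx.1 w p, ?_⟩
    calc x w p ≤ ∑ p', x w p' :=
          Finset.single_le_sum (fun p' _ => hx.1 w p') (Finset.mem_univ p)
      _ = d w := hx.2 w
  -- continuity of F in x
  have hFxcont : ∀ u, Continuous (fun x => F x u) := by
    intro u
    apply Continuous.add
    · apply continuous_finset_sum
      intro e _
      apply (hσcont e).comp
      apply Continuous.add _ continuous_const
      apply continuous_finset_sum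
      intro w _
      apply continuous_finset_sum
      intro p _
      exact continuous_const.mul ((continuous_apply p).comp (continuous_apply w))
    · apply continuous_const.mul
      apply continuous_finset_sum
      intro w _
      apply continuous_finset_sum
      intro p _
      exact (continuous_mul_log_div (d w) (hd w)).comp
        ((continuous_apply p).comp (continuous_apply w))
  -- minimizers exist
  have hmin : ∀ u : E → ℝ, ∃ x ∈ X, φ u = F x u ∧ ∀ y ∈ X, F x u ≤ F y u := by
    intro u
    obtain ⟨x, hxX, hxmin⟩ := hXcomp.exists_isMinOn hXne (hFxcont u).continuousOn
    have hm : ∀ y ∈ X, F x u ≤ F y u := fun y hy => (isMinOn_iff.mp hxmin) y hy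
    refine ⟨x, hxX, ?_, hm⟩
    apply le_antisymm
    · exact csInf_le ⟨F x u, by rintro a ⟨y, hy, rfl⟩; exact hm y hy⟩ ⟨x, hxX, rfl⟩
    · exact le_csInf ⟨F x u, x, hxX, rfl⟩ (by rintro a ⟨y, hy, rfl⟩; exact hm y hy)
  have hφle : ∀ (u : E → ℝ) (x), x ∈ X → φ u ≤ F x u := by
    intro u x hx
    obtain ⟨x₀, hx₀X, heq, hm⟩ := hmin u
    rw [heq]
    exact hm x hx
  -- convexity of φ
  have hφconv : ConvexOn ℝ Set.univ φ := by
    refine ⟨convex_univ, ?_⟩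
    intro u _ v _ a b ha hb hab
    obtain ⟨x, hxX, hxeq, _⟩ := hmin u
    obtain ⟨y, hyX, hyeq, _⟩ := hmin v
    have hxm := (hXmem x).mp hxX
    have hym := (hXmem y).mp hyX
    have hz : a • x + b • y ∈ X := by
      rw [hXmem]
      constructor
      · intro w p
        simp only [Pi.add_apply, Pi.smul_apply, smul_eq_mul]
        exact add_nonneg (mul_nonneg ha (hxm.1 w p)) (mul_nonneg hb (hym.1 w p))
      · intro w
        simp only [Pi.add_apply, Pi.smul_apply, smul_eq_mul]
        rw [Finset.sum_add_distrib, ← Finset.mul_sum, ← Finset.mul_sum, hxm.2 w, hym.2 w,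
          ← add_mul, hab, one_mul]
    have hΘlin : ∀ e, Θm (a • x + b • y) e = a * Θm x e + b * Θm y e := by
      intro e
      simp only [hΘm, Pi.add_apply, Pi.smul_apply, smul_eq_mul]
      rw [Finset.mul_sum, Finset.mul_sum, ← Finset.sum_add_distrib]
      refine Finset.sum_congr rfl fun w _ => ?_
      rw [Finset.mul_sum, Finset.mul_sum, ← Finset.sum_add_distrib]
      exact Finset.sum_congr rfl fun p _ => by ring
    have hσpart : ∑ e, σ e (Θm (a • x + b • y) e + (a • u + b • v) e)
        ≤ a * ∑ e, σ e (Θm x e + u e) + b * ∑ e, σ e (Θm y e + v e) := by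
      rw [Finset.mul_sum, Finset.mul_sum, ← Finset.sum_add_distrib]
      apply Finset.sum_le_sum
      intro e _
      have harg : Θm (a • x + b • y) e + (a • u + b • v) e
          = a * (Θm x e + u e) + b * (Θm y e + v e) := by
        rw [hΘlin e]
        simp only [Pi.add_apply, Pi.smul_apply, smul_eq_mul]
        ring
      rw [harg]
      have := (hσconv e).2 (Set.mem_univ (Θm x e + u e)) (Set.mem_univ (Θm y e + v e)) ha hb hab
      simpa [smul_eq_mul] using this
    have hEntpart : Ent (a • x + b • y) ≤ a * Ent x + b * Ent y := by
      simp only [hEnt]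
      rw [Finset.mul_sum, Finset.mul_sum, ← Finset.sum_add_distrib]
      apply Finset.sum_le_sum
      intro w _
      rw [Finset.mul_sum, Finset.mul_sum, ← Finset.sum_add_distrib]
      apply Finset.sum_le_sum
      intro p _
      have := (convexOn_mul_log_div (d w) (hd w)).2
        (Set.mem_Ici.mpr (hxm.1 w p)) (Set.mem_Ici.mpr (hym.1 w p)) ha hb hab
      simp only [smul_eq_mul] at this
      simpa [Pi.add_apply, Pi.smul_apply, smul_eq_mul] using this
    have hent' : γ * Ent (a • x + b • y) ≤ γ * (a * Ent x + b * Ent y) :=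
      mul_le_mul_of_nonneg_left hEntpart hγ.le
    calc φ (a • u + b • v) ≤ F (a • x + b • y) (a • u + b • v) := hφle _ _ hz
      _ ≤ (a * ∑ e, σ e (Θm x e + u e) + b * ∑ e, σ e (Θm y e + v e))
          + γ * (a * Ent x + b * Ent y) := by
        rw [hF]
        exact add_le_add hσpart hent'
      _ = a * F x u + b * F y v := by rw [hF]; ring
      _ = a • φ u + b • φ v := by rw [hxeq, hyeq]; simp [smul_eq_mul]
  -- subgradient at 0
  obtain ⟨t₀, hsub⟩ := exists_subgradient φ hφconv
  -- Gibbs point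
  set c₀ : ∀ w, P w → ℝ := fun w p => ∑ e, θ w p e * t₀ e with hc₀
  set Z₀ : W → ℝ := fun w => ∑ p, Real.exp (-c₀ w p / γ) with hZ₀
  have hZ₀pos : ∀ w, 0 < Z₀ w := fun w =>
    Finset.sum_pos (fun p _ => Real.exp_pos _) Finset.univ_nonempty
  set xh : ∀ w, P w → ℝ := fun w p => d w * Real.exp (-c₀ w p / γ) / Z₀ w with hxh
  have hxhX : xh ∈ X := by
    rw [hXmem]
    constructor
    · intro w p
      simp only [hxh]
      exact div_nonneg (mul_nonneg (hd w).le (Real.exp_pos _).le) (hZ₀pos w).le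
    · intro w
      have h : ∑ p, xh w p = d w * Z₀ w / Z₀ w := by
        rw [hZ₀, Finset.mul_sum, Finset.sum_div]
      rw [h, mul_div_assoc, div_self (hZ₀pos w).ne', mul_one]
  set SM : ℝ := γ * ∑ w, d w * Real.log (Z₀ w) with hSM
  -- sum swap
  have hswap : ∀ (x : ∀ w, P w → ℝ) (t : E → ℝ),
      ∑ e, t e * Θm x e = ∑ w, ∑ p, (∑ e, θ w p e * t e) * x w p := by
    intro x t
    simp only [hΘm]
    calc ∑ e, t e * ∑ w, ∑ p, θ w p e * x w p
        = ∑ e, ∑ w, ∑ p, t e * (θ w p e * x w p) := by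
          refine Finset.sum_congr rfl fun e _ => ?_
          rw [Finset.mul_sum]
          exact Finset.sum_congr rfl fun w _ => by rw [Finset.mul_sum]
      _ = ∑ w, ∑ e, ∑ p, t e * (θ w p e * x w p) := Finset.sum_comm
      _ = ∑ w, ∑ p, ∑ e, t e * (θ w p e * x w p) :=
          Finset.sum_congr rfl fun w _ => Finset.sum_comm
      _ = ∑ w, ∑ p, (∑ e, θ w p e * t e) * x w p := by
          refine Finset.sum_congr rfl fun w _ => Finset.sum_congr rfl fun p _ => ?_
          rw [Finset.sum_mul]
          exact Finset.sum_congr rfl fun e _ => by ring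
  -- Gibbs identity
  have hGibbs : γ * Ent xh + ∑ w, ∑ p, c₀ w p * xh w p = -SM := by
    have hper : ∀ w ∈ Finset.univ,
        γ * (∑ p, xh w p * Real.log (xh w p / d w)) + ∑ p, c₀ w p * xh w p
        = -(γ * (d w * Real.log (Z₀ w))) := fun w _ => by
      have h := gibbs_eq (P := P w) hγ (hd w) (c₀ w)
      simpa [hxh, hZ₀] using h
    have hsum := Finset.sum_congr rfl hper
    rw [Finset.sum_add_distrib] at hsum
    have e1 : γ * Ent xh = ∑ w, γ * ∑ p, xh w p * Real.log (xh w p / d w) := by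
      rw [hEnt, Finset.mul_sum]
    have e2 : -SM = ∑ w, -(γ * (d w * Real.log (Z₀ w))) := by
      rw [hSM, Finset.mul_sum, Finset.sum_neg_distrib]
    rw [e1, e2]
    exact hsum
  -- master inequality
  have hmaster : ∀ v : E → ℝ, ∑ e, (v e * t₀ e - σ e (v e)) ≤ -SM - φ 0 := by
    intro v
    set u : E → ℝ := fun e => v e - Θm xh e with hu
    have h1 : φ u ≤ F xh u := hφle u xh hxhX
    have h2 : F xh u = (∑ e, σ e (v e)) + γ * Ent xh := by
      simp only [hF]
      congr 1
      refine Finset.sum_congr rfl fun e _ => ?_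
      congr 1
      simp only [hu]
      ring
    have h3 : φ 0 + ∑ e, t₀ e * u e ≤ φ u := hsub u
    have h4 : ∑ e, t₀ e * u e = ∑ e, t₀ e * v e - ∑ e, t₀ e * Θm xh e := by
      rw [← Finset.sum_sub_distrib]
      exact Finset.sum_congr rfl fun e _ => by simp only [hu]; ring
    have h5 : ∑ e, t₀ e * Θm xh e = ∑ w, ∑ p, c₀ w p * xh w p := by
      rw [hswap xh t₀]
    have h6 : ∑ e, (v e * t₀ e - σ e (v e)) = ∑ e, t₀ e * v e - ∑ e, σ e (v e) := by
      rw [← Finset.sum_sub_distrib]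
      exact Finset.sum_congr rfl fun e _ => by ring
    rw [h6]
    have h7 : γ * Ent xh = -SM - ∑ w, ∑ p, c₀ w p * xh w p := by linarith [hGibbs]
    rw [h2, h7] at h1
    rw [h4, h5] at h3
    linarith
  -- feasibility of t₀
  have hfeas : ∀ e, BddAbove (Set.range fun f : ℝ => f * t₀ e - σ e f) := by
    intro e
    refine ⟨-SM - φ 0 - ∑ e' ∈ Finset.univ.erase e, ((0:ℝ) * t₀ e' - σ e' 0), ?_⟩
    rintro a ⟨f, rfl⟩
    set v : E → ℝ := fun e' => if e' = e then f else 0 with hv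
    have hm := hmaster v
    rw [← Finset.add_sum_erase _ _ (Finset.mem_univ e)] at hm
    have hve : v e = f := by simp [hv]
    have hrest : ∑ e' ∈ Finset.univ.erase e, (v e' * t₀ e' - σ e' (v e'))
        = ∑ e' ∈ Finset.univ.erase e, ((0:ℝ) * t₀ e' - σ e' 0) := by
      refine Finset.sum_congr rfl fun e' he' => ?_
      have : v e' = 0 := by simp [hv, (Finset.mem_erase.mp he').1]
      rw [this]
    rw [hve, hrest] at hm
    show f * t₀ e - σ e f ≤ _
    linarith
  -- conjugate sum bound
  have hσsum : ∑ e, σstar e (t₀ e) ≤ -SM - φ 0 := by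
    have h := sum_csSup_le (fun e f => f * t₀ e - σ e f) hfeas hmaster
    calc ∑ e, σstar e (t₀ e) = ∑ e, sSup (Set.range fun f : ℝ => f * t₀ e - σ e f) :=
        Finset.sum_congr rfl fun e _ => hσstar e (t₀ e)
      _ ≤ -SM - φ 0 := h
  have hDt₀ : D t₀ ≤ -(φ 0) := by
    have hDe : D t₀ = SM + ∑ e, σstar e (t₀ e) := by
      rw [hD t₀, hSM]
    rw [hDe]
    linarith
  -- weak duality
  have hweak : ∀ x ∈ X, ∀ t : E → ℝ,
      (∀ e, BddAbove (Set.range fun f : ℝ => f * t e - σ e f)) → -(D t) ≤ Φ x := by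
    intro x hxX t ht
    have hxm := (hXmem x).mp hxX
    have hσge : ∀ e, Θm x e * t e - σstar e (t e) ≤ σ e (Θm x e) := by
      intro e
      have h1 : Θm x e * t e - σ e (Θm x e) ≤ σstar e (t e) := by
        rw [hσstar]
        exact le_csSup (ht e) ⟨Θm x e, rfl⟩
      linarith
    have hσge' : ∑ e, Θm x e * t e - ∑ e, σstar e (t e) ≤ ∑ e, σ e (Θm x e) := by
      rw [← Finset.sum_sub_distrib]
      exact Finset.sum_le_sum fun e _ => hσge e
    have hent : ∀ w, -(γ * (d w * Real.log (∑ p, Real.exp (-(∑ e, θ w p e * t e) / γ)))) ≤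
        γ * ∑ p, x w p * Real.log (x w p / d w) + ∑ p, (∑ e, θ w p e * t e) * x w p := by
      intro w
      exact gibbs_ineq hγ (hd w) (fun p => ∑ e, θ w p e * t e) (x w)
        (fun p => hxm.1 w p) (hxm.2 w)
    have hentsum := Finset.sum_le_sum fun w (_ : w ∈ Finset.univ) => hent w
    rw [Finset.sum_add_distrib] at hentsum
    have hL : ∑ w, -(γ * (d w * Real.log (∑ p, Real.exp (-(∑ e, θ w p e * t e) / γ))))
        = -(γ * ∑ w, d w * Real.log (∑ p, Real.exp (-(∑ e, θ w p e * t e) / γ))) := by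
      rw [Finset.mul_sum, ← Finset.sum_neg_distrib]
    have hR : ∑ w, γ * ∑ p, x w p * Real.log (x w p / d w)
        = γ * ∑ w, ∑ p, x w p * Real.log (x w p / d w) := by
      rw [Finset.mul_sum]
    rw [hL, hR] at hentsum
    have hsw : ∑ w, ∑ p, (∑ e, θ w p e * t e) * x w p = ∑ e, t e * Θm x e :=
      (hswap x t).symm
    rw [hsw] at hentsum
    have hmul : ∑ e, Θm x e * t e = ∑ e, t e * Θm x e :=
      Finset.sum_congr rfl fun e _ => by ring
    rw [hD t, hΦ x]
    have hΦx : (∑ e, σ e (∑ w, ∑ p, θ w p e * x w p)) = ∑ e, σ e (Θm x e) := by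
      rw [hΘm]
    rw [hΦx]
    rw [hmul] at hσge'
    linarith
  -- φ 0 = sInf (Φ '' X)
  have hφ0 : φ 0 = sInf (Φ '' X) := by
    have himg : (fun x => F x 0) '' X = Φ '' X := by
      apply Set.image_congr
      intro x _
      simp only [hF, hΘm, hEnt, Pi.zero_apply, add_zero]
      rw [hΦ x]
    simp only [hφdef]
    rw [himg]
  -- assemble
  have hANe : (Φ '' X).Nonempty := hXne.image Φ
  have h1 : ∀ v ∈ {v | ∃ t : E → ℝ,
      (∀ e, BddAbove (Set.range fun f : ℝ => f * t e - σ e f)) ∧ v = D t},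
      -v ≤ sInf (Φ '' X) := by
    rintro v ⟨t, ht, rfl⟩
    apply le_csInf hANe
    rintro a ⟨x, hx, rfl⟩
    exact hweak x hx t ht
  have hSne : D t₀ ∈ {v | ∃ t : E → ℝ,
      (∀ e, BddAbove (Set.range fun f : ℝ => f * t e - σ e f)) ∧ v = D t} :=
    ⟨t₀, hfeas, rfl⟩
  have hbddS : BddBelow {v | ∃ t : E → ℝ,
      (∀ e, BddAbove (Set.range fun f : ℝ => f * t e - σ e f)) ∧ v = D t} :=
    ⟨-sInf (Φ '' X), fun v hv => neg_le.mpr (h1 v hv)⟩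
  have h2 : sInf {v | ∃ t : E → ℝ,
      (∀ e, BddAbove (Set.range fun f : ℝ => f * t e - σ e f)) ∧ v = D t}
      ≤ -(sInf (Φ '' X)) := by
    refine le_trans (csInf_le hbddS hSne) ?_
    rw [← hφ0]
    exact hDt₀
  have h3 : -(sInf (Φ '' X)) ≤ sInf {v | ∃ t : E → ℝ,
      (∀ e, BddAbove (Set.range fun f : ℝ => f * t e - σ e f)) ∧ v = D t} :=
    le_csInf ⟨_, hSne⟩ fun v hv => neg_le.mpr (h1 v hv)
  linarith
end
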